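/- arXiv:1606.05155 — 2 statements merged into one kernel-verified Lean document; each statement's English description precedes it below -/
import Mathlib

section
/- Let α, β be positive integers with gcd(α,β) = 1 and α < β. Then in ℚ⟦q⟧ the formal power series (α·L(q^α) − β·L(q^β))² has constant term (α − β)², and for every integer n ≥ 1 its coefficient of qⁿ equals 240α²σ₃(n/α) + 240β²σ₃(n/β) + 48α(β − 6n)σ(n/α) + 48β(α − 6n)σ(n/β) − 1152αβ·W_{(α,β)}(n). -/
open scoped BigOperators
open Finset

noncomputable section

/-- `sig k t n` = sigma_k(n/t) if t divides n, else 0. -/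
def sig (k t n : ℕ) : ℚ := if t ∣ n then (ArithmeticFunction.sigma k (n / t) : ℚ) else 0

/-- Convolution sum `W a b n = ∑ sigma(l) sigma(m)` over positive `l, m` with `a*l + b*m = n`. -/
def W (a b n : ℕ) : ℚ :=
  ∑ l ∈ Finset.Icc 1 n, ∑ m ∈ Finset.Icc 1 n,
    if a * l + b * m = n then
      (ArithmeticFunction.sigma 1 l : ℚ) * (ArithmeticFunction.sigma 1 m : ℚ)
    else 0

/-- `Lt t` is `L(q^t)` where `L(q) = 1 - 24 ∑_{n≥1} sigma(n) q^n`. -/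
def Lt (t : ℕ) : PowerSeries ℚ :=
  PowerSeries.mk fun n =>
    if n = 0 then 1
    else if t ∣ n then -24 * (ArithmeticFunction.sigma 1 (n / t) : ℚ) else 0

namespace LQ

abbrev Q4 := ℕ × ℕ × ℕ × ℕ


@[simp, reducible] def qa (q : Q4) : ℕ := q.1
@[simp, reducible] def qb (q : Q4) : ℕ := q.2.1
@[simp, reducible] def qx (q : Q4) : ℕ := q.2.2.1
@[simp, reducible] def qy (q : Q4) : ℕ := q.2.2.2

def quad (n : ℕ) : Finset Q4 :=
  ((Finset.Icc 1 n ×ˢ Finset.Icc 1 n ×ˢ Finset.Icc 1 n ×ˢ Finset.Icc 1 n)).filter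
    (fun q => qa q * qx q + qb q * qy q = n)

lemma mem_quad {n : ℕ} {q : Q4} :
    q ∈ quad n ↔ 0 < qa q ∧ 0 < qb q ∧ 0 < qx q ∧ 0 < qy q ∧ qa q * qx q + qb q * qy q = n := by
  obtain ⟨a, b, x, y⟩ := q
  simp only [quad, mem_filter, mem_product, Finset.mem_Icc, qa, qb, qx, qy]
  constructor
  · rintro ⟨⟨⟨h1,h2⟩,⟨h3,h4⟩,⟨h5,h6⟩,⟨h7,h8⟩⟩, he⟩
    exact ⟨h1, h3, h5, h7, he⟩
  · rintro ⟨h1, h3, h5, h7, he⟩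
    refine ⟨⟨⟨h1, ?_⟩, ⟨h3, ?_⟩, ⟨h5, ?_⟩, ⟨h7, ?_⟩⟩, he⟩
    · calc a ≤ a * x := Nat.le_mul_of_pos_right a h5
        _ ≤ n := he ▸ Nat.le_add_right _ _
    · calc b ≤ b * y := Nat.le_mul_of_pos_right b h7
        _ ≤ n := he ▸ Nat.le_add_left _ _
    · calc x ≤ a * x := Nat.le_mul_of_pos_left x h1
        _ ≤ n := he ▸ Nat.le_add_right _ _
    · calc y ≤ b * y := Nat.le_mul_of_pos_left y h3
        _ ≤ n := he ▸ Nat.le_add_left _ _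

lemma phi_sum (n : ℕ) (f : Q4 → ℚ) :
    ∑ q ∈ (quad n).filter (fun q => qx q < qy q),
        f (qa q + qb q, qb q, qx q, qy q - qx q)
      = ∑ q ∈ (quad n).filter (fun q => qb q < qa q), f q := by
  refine Finset.sum_nbij' (fun q => (qa q + qb q, qb q, qx q, qy q - qx q))
    (fun q => (qa q - qb q, qb q, qx q, qy q + qx q)) ?_ ?_ ?_ ?_ ?_
  · rintro ⟨a,b,x,y⟩ hq
    simp only [mem_filter, mem_quad, qa, qb, qx, qy] at hq ⊢
    obtain ⟨⟨ha, hb, hx, hy, he⟩, hxy⟩ := hq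
    refine ⟨⟨by omega, hb, hx, by omega, ?_⟩, by omega⟩
    have hle : b * x ≤ b * y := Nat.mul_le_mul_left _ hxy.le
    zify [hxy.le, hle]
    zify at he
    linarith [he]
  · rintro ⟨a,b,x,y⟩ hq
    simp only [mem_filter, mem_quad, qa, qb, qx, qy] at hq ⊢
    obtain ⟨⟨ha, hb, hx, hy, he⟩, hba⟩ := hq
    refine ⟨⟨by omega, hb, hx, by omega, ?_⟩, by omega⟩
    zify [hba.le]
    zify at he
    linarith [he]
  · rintro ⟨a,b,x,y⟩ hq
    simp only [mem_filter, mem_quad, qa, qb, qx, qy] at hq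
    simp only [qa, qb, qx, qy]
    obtain ⟨⟨ha, hb, hx, hy, he⟩, hxy⟩ := hq
    ext <;> simp <;> omega
  · rintro ⟨a,b,x,y⟩ hq
    simp only [mem_filter, mem_quad, qa, qb, qx, qy] at hq
    simp only [qa, qb, qx, qy]
    obtain ⟨⟨ha, hb, hx, hy, he⟩, hba⟩ := hq
    ext <;> simp <;> omega
  · rintro ⟨a,b,x,y⟩ _; rfl

lemma psi_sum (n : ℕ) (f : Q4 → ℚ) :
    ∑ q ∈ (quad n).filter (fun q => qy q < qx q),
        f (qa q, qa q + qb q, qx q - qy q, qy q)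
      = ∑ q ∈ (quad n).filter (fun q => qa q < qb q), f q := by
  refine Finset.sum_nbij' (fun q => (qa q, qa q + qb q, qx q - qy q, qy q))
    (fun q => (qa q, qb q - qa q, qx q + qy q, qy q)) ?_ ?_ ?_ ?_ ?_
  · rintro ⟨a,b,x,y⟩ hq
    simp only [mem_filter, mem_quad, qa, qb, qx, qy] at hq ⊢
    obtain ⟨⟨ha, hb, hx, hy, he⟩, hyx⟩ := hq
    refine ⟨⟨ha, by omega, by omega, hy, ?_⟩, by omega⟩
    have hle : a * y ≤ a * x := Nat.mul_le_mul_left _ hyx.le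
    zify [hyx.le, hle]
    zify at he
    linarith [he]
  · rintro ⟨a,b,x,y⟩ hq
    simp only [mem_filter, mem_quad, qa, qb, qx, qy] at hq ⊢
    obtain ⟨⟨ha, hb, hx, hy, he⟩, hab⟩ := hq
    refine ⟨⟨ha, by omega, by omega, hy, ?_⟩, by omega⟩
    zify [hab.le]
    zify at he
    linarith [he]
  · rintro ⟨a,b,x,y⟩ hq
    simp only [mem_filter, mem_quad, qa, qb, qx, qy] at hq
    simp only [qa, qb, qx, qy]
    obtain ⟨⟨ha, hb, hx, hy, he⟩, hyx⟩ := hq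
    ext <;> simp <;> omega
  · rintro ⟨a,b,x,y⟩ hq
    simp only [mem_filter, mem_quad, qa, qb, qx, qy] at hq
    simp only [qa, qb, qx, qy]
    obtain ⟨⟨ha, hb, hx, hy, he⟩, hab⟩ := hq
    ext <;> simp <;> omega
  · rintro ⟨a,b,x,y⟩ _; rfl

@[reducible] def qswap (q : Q4) : Q4 := (qb q, qa q, qy q, qx q)

lemma swap_sum (n : ℕ) (P : Q4 → Prop) [DecidablePred P] (f : Q4 → ℚ) :
    ∑ q ∈ (quad n).filter (fun q => P (qswap q)), f (qswap q)
      = ∑ q ∈ (quad n).filter P, f q := by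
  refine Finset.sum_nbij' qswap qswap ?_ ?_ ?_ ?_ ?_
  · rintro ⟨a,b,x,y⟩ hq
    simp only [mem_filter, mem_quad, qswap, qa, qb, qx, qy] at hq ⊢
    exact ⟨⟨hq.1.2.1, hq.1.1, hq.1.2.2.2.1, hq.1.2.2.1, by omega⟩, hq.2⟩
  · rintro ⟨a,b,x,y⟩ hq
    simp only [mem_filter, mem_quad, qswap, qa, qb, qx, qy] at hq ⊢
    exact ⟨⟨hq.1.2.1, hq.1.1, hq.1.2.2.2.1, hq.1.2.2.1, by omega⟩, hq.2⟩
  · rintro ⟨a,b,x,y⟩ _; rfl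
  · rintro ⟨a,b,x,y⟩ _; rfl
  · rintro ⟨a,b,x,y⟩ _; rfl


lemma diag_ab (n : ℕ) (f : Q4 → ℚ) :
    ∑ q ∈ (quad n).filter (fun q => qa q = qb q), f q
      = ∑ d ∈ n.divisors, ∑ x ∈ Finset.Ico 1 (n / d), f (d, d, x, n / d - x) := by
  rw [← Finset.sum_sigma (n.divisors) (fun d => Finset.Ico 1 (n / d))
      (fun p => f (p.1, p.1, p.2, n / p.1 - p.2))]
  refine Finset.sum_nbij' (fun q => ⟨qa q, qx q⟩) (fun p => (p.1, p.1, p.2, n / p.1 - p.2))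
    ?_ ?_ ?_ ?_ ?_
  · rintro ⟨a,b,x,y⟩ hq
    simp only [mem_filter, mem_quad, qa, qb, qx, qy] at hq
    obtain ⟨⟨ha, hb, hx, hy, he⟩, hab⟩ := hq
    subst hab
    have hn : n = a * (x + y) := by rw [← he]; ring
    have hnpos : 0 < n := by
      rw [← he]; have := Nat.mul_pos ha hx; omega
    have hd : a ∣ n := ⟨x + y, hn⟩
    have hdiv : n / a = x + y := by rw [hn, Nat.mul_div_cancel_left _ ha]
    simp only [Finset.mem_sigma, Nat.mem_divisors, Finset.mem_Ico, qa, qx]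
    exact ⟨⟨hd, by omega⟩, hx, by omega⟩
  · rintro ⟨d, x⟩ hp
    simp only [Finset.mem_sigma, Nat.mem_divisors, Finset.mem_Ico] at hp
    obtain ⟨⟨hd, hn⟩, hx1, hx2⟩ := hp
    have hdpos : 0 < d := Nat.pos_of_dvd_of_pos hd (Nat.pos_of_ne_zero hn)
    have hdm : d * (n / d) = n := Nat.mul_div_cancel' hd
    simp only [mem_filter, mem_quad, qa, qb, qx, qy]
    have hxy : x + (n / d - x) = n / d := by omega
    refine ⟨⟨hdpos, hdpos, hx1, by omega, ?_⟩, by trivial⟩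
    calc d * x + d * (n / d - x) = d * (x + (n / d - x)) := by ring
      _ = n := by rw [hxy, hdm]
  · rintro ⟨a,b,x,y⟩ hq
    simp only [mem_filter, mem_quad, qa, qb, qx, qy] at hq
    obtain ⟨⟨ha, hb, hx, hy, he⟩, hab⟩ := hq
    subst hab
    have hn : n = a * (x + y) := by rw [← he]; ring
    have hdiv : n / a = x + y := by rw [hn, Nat.mul_div_cancel_left _ ha]
    simp only [qa, qx, Prod.mk.injEq]
    exact ⟨by trivial, by trivial, by trivial, by omega⟩
  · rintro ⟨d, x⟩ _; rfl
  · rintro ⟨a,b,x,y⟩ hq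
    simp only [mem_filter, mem_quad, qa, qb, qx, qy] at hq
    obtain ⟨⟨ha, hb, hx, hy, he⟩, hab⟩ := hq
    subst hab
    have hn : n = a * (x + y) := by rw [← he]; ring
    have hdiv : n / a = x + y := by rw [hn, Nat.mul_div_cancel_left _ ha]
    have : n / a - x = y := by omega
    simp only [qa, qx]
    rw [this]

lemma diag_xy (n : ℕ) (f : Q4 → ℚ) :
    ∑ q ∈ (quad n).filter (fun q => qx q = qy q), f q
      = ∑ d ∈ n.divisors, ∑ a ∈ Finset.Ico 1 (n / d), f (a, n / d - a, d, d) := by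
  rw [← Finset.sum_sigma (n.divisors) (fun d => Finset.Ico 1 (n / d))
      (fun p => f (p.2, n / p.1 - p.2, p.1, p.1))]
  refine Finset.sum_nbij' (fun q => ⟨qx q, qa q⟩) (fun p => (p.2, n / p.1 - p.2, p.1, p.1))
    ?_ ?_ ?_ ?_ ?_
  · rintro ⟨a,b,x,y⟩ hq
    simp only [mem_filter, mem_quad, qa, qb, qx, qy] at hq
    obtain ⟨⟨ha, hb, hx, hy, he⟩, hxy⟩ := hq
    subst hxy
    have hn : n = x * (a + b) := by rw [← he]; ring
    have hnpos : 0 < n := by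
      rw [← he]; have := Nat.mul_pos ha hx; omega
    have hd : x ∣ n := ⟨a + b, hn⟩
    have hdiv : n / x = a + b := by rw [hn, Nat.mul_div_cancel_left _ hx]
    simp only [Finset.mem_sigma, Nat.mem_divisors, Finset.mem_Ico, qa, qx]
    exact ⟨⟨hd, by omega⟩, ha, by omega⟩
  · rintro ⟨d, a⟩ hp
    simp only [Finset.mem_sigma, Nat.mem_divisors, Finset.mem_Ico] at hp
    obtain ⟨⟨hd, hn⟩, ha1, ha2⟩ := hp
    have hdpos : 0 < d := Nat.pos_of_dvd_of_pos hd (Nat.pos_of_ne_zero hn)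
    have hdm : d * (n / d) = n := Nat.mul_div_cancel' hd
    simp only [mem_filter, mem_quad, qa, qb, qx, qy]
    have hab : a + (n / d - a) = n / d := by omega
    refine ⟨⟨ha1, by omega, hdpos, hdpos, ?_⟩, by trivial⟩
    calc a * d + (n / d - a) * d = (a + (n / d - a)) * d := by ring
      _ = n := by rw [hab]; rw [mul_comm]; exact hdm
  · rintro ⟨a,b,x,y⟩ hq
    simp only [mem_filter, mem_quad, qa, qb, qx, qy] at hq
    obtain ⟨⟨ha, hb, hx, hy, he⟩, hxy⟩ := hq
    subst hxy
    have hn : n = x * (a + b) := by rw [← he]; ring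
    have hdiv : n / x = a + b := by rw [hn, Nat.mul_div_cancel_left _ hx]
    simp only [qa, qx, Prod.mk.injEq]
    exact ⟨trivial, by rw [hdiv]; omega, trivial⟩
  · rintro ⟨d, a⟩ _; rfl
  · rintro ⟨a,b,x,y⟩ hq
    simp only [mem_filter, mem_quad, qa, qb, qx, qy] at hq
    obtain ⟨⟨ha, hb, hx, hy, he⟩, hxy⟩ := hq
    subst hxy
    have hn : n = x * (a + b) := by rw [← he]; ring
    have hdiv : n / x = a + b := by rw [hn, Nat.mul_div_cancel_left _ hx]
    have : n / x - a = b := by omega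
    simp only [qa, qx]
    rw [this]

lemma sum_sq_Ico (m : ℕ) :
    ∑ a ∈ Finset.Ico 1 m, (a : ℚ) ^ 2 = (m : ℚ) * (m - 1) * (2 * m - 1) / 6 := by
  induction m with
  | zero => simp
  | succ k ih =>
    rcases Nat.eq_zero_or_pos k with rfl | hk
    · simp
    · rw [Finset.sum_Ico_succ_top hk, ih]
      push_cast
      ring

lemma sum_sq_reflect (m : ℕ) :
    ∑ a ∈ Finset.Ico 1 m, ((m - a : ℕ) : ℚ) ^ 2 = ∑ a ∈ Finset.Ico 1 m, (a : ℚ) ^ 2 := by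
  refine Finset.sum_nbij' (fun a => m - a) (fun a => m - a) ?_ ?_ ?_ ?_ ?_
  · intro a ha; simp only [Finset.mem_Ico] at ha ⊢; omega
  · intro a ha; simp only [Finset.mem_Ico] at ha ⊢; omega
  · intro a ha; simp only [Finset.mem_Ico] at ha; omega
  · intro a ha; simp only [Finset.mem_Ico] at ha; omega
  · intro a ha; rfl


lemma split3 {α : Type*} (s : Finset α) (u v : α → ℕ) (f : α → ℚ) :
    ∑ q ∈ s, f q
      = ∑ q ∈ s.filter (fun q => u q < v q), f q
        + ∑ q ∈ s.filter (fun q => v q < u q), f q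
        + ∑ q ∈ s.filter (fun q => u q = v q), f q := by
  rw [← Finset.sum_filter_add_sum_filter_not s (fun q => u q < v q) f, add_assoc]
  congr 1
  rw [← Finset.sum_filter_add_sum_filter_not (s.filter (fun q => ¬ u q < v q))
      (fun q => v q < u q) f, Finset.filter_filter, Finset.filter_filter]
  congr 1
  · apply Finset.sum_congr _ (fun _ _ => rfl)
    apply Finset.filter_congr
    intro q _
    constructor
    · rintro ⟨_, h⟩; exact h
    · intro h; exact ⟨by omega, h⟩
  · apply Finset.sum_congr _ (fun _ _ => rfl)
    apply Finset.filter_congr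
    intro q _
    constructor
    · rintro ⟨h1, h2⟩; omega
    · intro h; omega


lemma swap_ba (n : ℕ) :
    ∑ q ∈ (quad n).filter (fun q => qb q < qa q), (qb q : ℚ)^2
      = ∑ q ∈ (quad n).filter (fun q => qa q < qb q), (qa q : ℚ)^2 := by
  refine Finset.sum_nbij' (fun q => (qb q, qa q, qy q, qx q)) (fun q => (qb q, qa q, qy q, qx q))
    ?_ ?_ ?_ ?_ ?_ <;> rintro ⟨a,b,x,y⟩ hq <;>
    simp only [mem_filter, mem_quad, qa, qb, qx, qy] at * <;>
    first
      | (exact ⟨⟨hq.1.2.1, hq.1.1, hq.1.2.2.2.1, hq.1.2.2.1, by omega⟩, hq.2⟩)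
      | rfl

lemma swap_xy (n : ℕ) :
    ∑ q ∈ (quad n).filter (fun q => qx q < qy q), (qb q : ℚ)^2
      = ∑ q ∈ (quad n).filter (fun q => qy q < qx q), (qa q : ℚ)^2 := by
  refine Finset.sum_nbij' (fun q => (qb q, qa q, qy q, qx q)) (fun q => (qb q, qa q, qy q, qx q))
    ?_ ?_ ?_ ?_ ?_ <;> rintro ⟨a,b,x,y⟩ hq <;>
    simp only [mem_filter, mem_quad, qa, qb, qx, qy] at * <;>
    first
      | (exact ⟨⟨hq.1.2.1, hq.1.1, hq.1.2.2.2.1, hq.1.2.2.1, by omega⟩, hq.2⟩)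
      | rfl

set_option maxHeartbeats 2000000 in
lemma besge_quad (n : ℕ) :
    12 * ∑ q ∈ quad n, ((qa q : ℚ) * qb q)
      = 5 * (ArithmeticFunction.sigma 3 n : ℚ)
        + (1 - 6 * (n : ℚ)) * (ArithmeticFunction.sigma 1 n : ℚ) := by
  -- abbreviations for the various region sums
  -- key identities from the bijections
  have E3 : ∑ q ∈ (quad n).filter (fun q => qb q < qa q), ((qa q : ℚ) - qb q)^2
      = ∑ q ∈ (quad n).filter (fun q => qx q < qy q), (qa q : ℚ)^2 := by
    rw [← phi_sum n (fun q => ((qa q : ℚ) - qb q)^2)]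
    refine Finset.sum_congr rfl ?_
    rintro ⟨a,b,x,y⟩ _
    simp only [qa, qb, qx, qy]
    push_cast; ring
  have E4 : ∑ q ∈ (quad n).filter (fun q => qa q < qb q), ((qa q : ℚ) - qb q)^2
      = ∑ q ∈ (quad n).filter (fun q => qy q < qx q), (qb q : ℚ)^2 := by
    rw [← psi_sum n (fun q => ((qa q : ℚ) - qb q)^2)]
    refine Finset.sum_congr rfl ?_
    rintro ⟨a,b,x,y⟩ _
    simp only [qa, qb, qx, qy]
    push_cast; ring
  have E5 : ∑ q ∈ (quad n).filter (fun q => qa q = qb q), ((qa q : ℚ) - qb q)^2 = 0 := by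
    refine Finset.sum_eq_zero ?_
    intro q hq
    simp only [mem_filter] at hq
    rw [hq.2]; ring
  have E6 : ∑ q ∈ (quad n).filter (fun q => qx q < qy q), ((qa q : ℚ) + qb q)^2
      = ∑ q ∈ (quad n).filter (fun q => qb q < qa q), (qa q : ℚ)^2 := by
    rw [← phi_sum n (fun q => (qa q : ℚ)^2)]
    refine Finset.sum_congr rfl ?_
    rintro ⟨a,b,x,y⟩ _
    simp only [qa, qb, qx, qy]
    push_cast; ring
  have E7 : ∑ q ∈ (quad n).filter (fun q => qy q < qx q), ((qa q : ℚ) + qb q)^2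
      = ∑ q ∈ (quad n).filter (fun q => qa q < qb q), (qb q : ℚ)^2 := by
    rw [← psi_sum n (fun q => (qb q : ℚ)^2)]
    refine Finset.sum_congr rfl ?_
    rintro ⟨a,b,x,y⟩ _
    simp only [qa, qb, qx, qy]
    push_cast; ring
  have E10 : ∑ q ∈ (quad n).filter (fun q => qy q < qx q), (qa q : ℚ)^2
      = ∑ q ∈ (quad n).filter (fun q => qa q < qb q), (qa q : ℚ)^2 := by
    rw [← psi_sum n (fun q => (qa q : ℚ)^2)]
  have E11 := swap_ba n
  have E12 := swap_xy n
  -- splits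
  have SV := split3 (quad n) qa qb (fun q => ((qa q : ℚ) - qb q)^2)
  have SU := split3 (quad n) qx qy (fun q => ((qa q : ℚ) + qb q)^2)
  have SA1 := split3 (quad n) qx qy (fun q => (qa q : ℚ)^2)
  have SA2 := split3 (quad n) qa qb (fun q => (qa q : ℚ)^2)
  have SB1 := split3 (quad n) qx qy (fun q => (qb q : ℚ)^2)
  have SB2 := split3 (quad n) qa qb (fun q => (qb q : ℚ)^2)
  -- U - V = 4ab
  have EUV : (∑ q ∈ quad n, ((qa q : ℚ) + qb q)^2) - (∑ q ∈ quad n, ((qa q : ℚ) - qb q)^2)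
      = 4 * ∑ q ∈ quad n, ((qa q : ℚ) * qb q) := by
    rw [← Finset.sum_sub_distrib, Finset.mul_sum]
    refine Finset.sum_congr rfl ?_
    intro q _; ring
  -- boundary evaluations
  have hA3 : ∑ q ∈ (quad n).filter (fun q => qx q = qy q), (qa q : ℚ)^2
      = ∑ d ∈ n.divisors, ((n / d : ℕ) : ℚ) * ((n / d : ℕ) - 1) * (2 * (n / d : ℕ) - 1) / 6 := by
    rw [diag_xy n (fun q => (qa q : ℚ)^2)]
    refine Finset.sum_congr rfl ?_
    intro d _
    simp only [qa]
    rw [sum_sq_Ico]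
  have hB3 : ∑ q ∈ (quad n).filter (fun q => qx q = qy q), (qb q : ℚ)^2
      = ∑ d ∈ n.divisors, ((n / d : ℕ) : ℚ) * ((n / d : ℕ) - 1) * (2 * (n / d : ℕ) - 1) / 6 := by
    rw [diag_xy n (fun q => (qb q : ℚ)^2)]
    refine Finset.sum_congr rfl ?_
    intro d _
    simp only [qb]
    rw [sum_sq_reflect, sum_sq_Ico]
  have hU3 : ∑ q ∈ (quad n).filter (fun q => qx q = qy q), ((qa q : ℚ) + qb q)^2
      = ∑ d ∈ n.divisors, (((n / d : ℕ) : ℚ) - 1) * ((n / d : ℕ) : ℚ)^2 := by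
    rw [diag_xy n (fun q => ((qa q : ℚ) + qb q)^2)]
    refine Finset.sum_congr rfl ?_
    intro d hd
    simp only [qa, qb]
    have hm1 : 1 ≤ n / d := by
      rw [Nat.mem_divisors] at hd
      exact Nat.one_le_div_iff (Nat.pos_of_dvd_of_pos hd.1 (Nat.pos_of_ne_zero hd.2)) |>.mpr
        (Nat.le_of_dvd (Nat.pos_of_ne_zero hd.2) hd.1)
    have : ∀ a ∈ Finset.Ico 1 (n / d), ((a : ℚ) + ((n / d - a : ℕ) : ℚ))^2
        = ((n / d : ℕ) : ℚ)^2 := by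
      intro a ha
      rw [Finset.mem_Ico] at ha
      have : ((n / d - a : ℕ) : ℚ) = ((n / d : ℕ) : ℚ) - (a : ℚ) := by
        have := ha.2
        push_cast [Nat.cast_sub (le_of_lt ha.2)]
        ring
      rw [this]; ring
    rw [Finset.sum_congr rfl this, Finset.sum_const, Nat.card_Ico]
    have : ((n / d - 1 : ℕ) : ℚ) = ((n / d : ℕ) : ℚ) - 1 := by
      push_cast [Nat.cast_sub hm1]; ring
    rw [nsmul_eq_mul, this]
  have hA3' : ∑ q ∈ (quad n).filter (fun q => qa q = qb q), (qa q : ℚ)^2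
      = ∑ d ∈ n.divisors, (((n / d : ℕ) : ℚ) - 1) * (d : ℚ)^2 := by
    rw [diag_ab n (fun q => (qa q : ℚ)^2)]
    refine Finset.sum_congr rfl ?_
    intro d hd
    simp only [qa]
    have hm1 : 1 ≤ n / d := by
      rw [Nat.mem_divisors] at hd
      exact Nat.one_le_div_iff (Nat.pos_of_dvd_of_pos hd.1 (Nat.pos_of_ne_zero hd.2)) |>.mpr
        (Nat.le_of_dvd (Nat.pos_of_ne_zero hd.2) hd.1)
    rw [Finset.sum_const, Nat.card_Ico, nsmul_eq_mul]
    have : ((n / d - 1 : ℕ) : ℚ) = ((n / d : ℕ) : ℚ) - 1 := by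
      push_cast [Nat.cast_sub hm1]; ring
    rw [this]
  have hB3' : ∑ q ∈ (quad n).filter (fun q => qa q = qb q), (qb q : ℚ)^2
      = ∑ d ∈ n.divisors, (((n / d : ℕ) : ℚ) - 1) * (d : ℚ)^2 := by
    rw [diag_ab n (fun q => (qb q : ℚ)^2)]
    refine Finset.sum_congr rfl ?_
    intro d hd
    simp only [qb]
    have hm1 : 1 ≤ n / d := by
      rw [Nat.mem_divisors] at hd
      exact Nat.one_le_div_iff (Nat.pos_of_dvd_of_pos hd.1 (Nat.pos_of_ne_zero hd.2)) |>.mpr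
        (Nat.le_of_dvd (Nat.pos_of_ne_zero hd.2) hd.1)
    rw [Finset.sum_const, Nat.card_Ico, nsmul_eq_mul]
    have : ((n / d - 1 : ℕ) : ℚ) = ((n / d : ℕ) : ℚ) - 1 := by
      push_cast [Nat.cast_sub hm1]; ring
    rw [this]
  -- combine: 4 * Sab = A3 + B3 + U3 - A3' - B3'
  have hmain : 4 * ∑ q ∈ quad n, ((qa q : ℚ) * qb q)
      = (∑ q ∈ (quad n).filter (fun q => qx q = qy q), (qa q : ℚ)^2)
        + (∑ q ∈ (quad n).filter (fun q => qx q = qy q), (qb q : ℚ)^2)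
        + (∑ q ∈ (quad n).filter (fun q => qx q = qy q), ((qa q : ℚ) + qb q)^2)
        - (∑ q ∈ (quad n).filter (fun q => qa q = qb q), (qa q : ℚ)^2)
        - (∑ q ∈ (quad n).filter (fun q => qa q = qb q), (qb q : ℚ)^2) := by
    linarith [E3, E4, E5, E6, E7, E10, E11, E12, SV, SU, SA1, SA2, SB1, SB2, EUV]
  rw [hA3, hB3, hU3, hA3', hB3'] at hmain
  have hF : (∑ d ∈ n.divisors,
      ((n / d : ℕ) : ℚ) * ((n / d : ℕ) - 1) * (2 * (n / d : ℕ) - 1) / 6)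
      = ∑ d ∈ n.divisors, (d : ℚ) * ((d : ℚ) - 1) * (2 * (d : ℚ) - 1) / 6 :=
    Nat.sum_div_divisors n (fun m => (m : ℚ) * ((m : ℚ) - 1) * (2 * (m : ℚ) - 1) / 6)
  have hG : (∑ d ∈ n.divisors, (((n / d : ℕ) : ℚ) - 1) * ((n / d : ℕ) : ℚ)^2)
      = ∑ d ∈ n.divisors, ((d : ℚ) - 1) * (d : ℚ)^2 :=
    Nat.sum_div_divisors n (fun m => ((m : ℚ) - 1) * (m : ℚ)^2)
  have hflip : ∀ d ∈ n.divisors, (((n / d : ℕ) : ℚ) - 1) * (d : ℚ)^2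
      = (n : ℚ) * d - (d : ℚ)^2 := by
    intro d hd
    rw [Nat.mem_divisors] at hd
    have h1 : (n / d) * d = n := Nat.div_mul_cancel hd.1
    have hc : ((n / d : ℕ) : ℚ) * (d : ℚ) = (n : ℚ) := by
      rw [← Nat.cast_mul, h1]
    nlinarith [hc]
  have hH : (∑ d ∈ n.divisors, (((n / d : ℕ) : ℚ) - 1) * (d : ℚ)^2)
      = ∑ d ∈ n.divisors, ((n : ℚ) * d - (d : ℚ)^2) :=
    Finset.sum_congr rfl hflip
  rw [hF, hG, hH] at hmain
  have sigma3 : (ArithmeticFunction.sigma 3 n : ℚ) = ∑ d ∈ n.divisors, (d : ℚ)^3 := by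
    rw [ArithmeticFunction.sigma_apply]
    push_cast
    rfl
  have sigma1 : (ArithmeticFunction.sigma 1 n : ℚ) = ∑ d ∈ n.divisors, (d : ℚ) := by
    rw [ArithmeticFunction.sigma_one_apply]
    push_cast
    rfl
  have hcomb : (∑ d ∈ n.divisors, (d : ℚ) * ((d : ℚ) - 1) * (2 * (d : ℚ) - 1) / 6)
      + (∑ d ∈ n.divisors, (d : ℚ) * ((d : ℚ) - 1) * (2 * (d : ℚ) - 1) / 6)
      + (∑ d ∈ n.divisors, ((d : ℚ) - 1) * (d : ℚ)^2)
      - (∑ d ∈ n.divisors, ((n : ℚ) * d - (d : ℚ)^2))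
      - (∑ d ∈ n.divisors, ((n : ℚ) * d - (d : ℚ)^2))
      = ∑ d ∈ n.divisors, ((5 * (d : ℚ)^3 + d) / 3 - 2 * n * d) := by
    rw [← Finset.sum_add_distrib, ← Finset.sum_add_distrib, ← Finset.sum_sub_distrib,
      ← Finset.sum_sub_distrib]
    exact Finset.sum_congr rfl (fun d _ => by ring)
  rw [hcomb] at hmain
  rw [sigma3, sigma1]
  calc 12 * ∑ q ∈ quad n, ((qa q : ℚ) * qb q)
      = 3 * (4 * ∑ q ∈ quad n, ((qa q : ℚ) * qb q)) := by ring
    _ = 3 * ∑ d ∈ n.divisors, ((5 * (d : ℚ)^3 + d) / 3 - 2 * n * d) := by rw [hmain]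
    _ = ∑ d ∈ n.divisors, (5 * (d : ℚ)^3 + d - 6 * n * d) := by
        rw [Finset.mul_sum]
        exact Finset.sum_congr rfl (fun d _ => by ring)
    _ = 5 * (∑ d ∈ n.divisors, (d : ℚ)^3) + (1 - 6 * (n : ℚ)) * ∑ d ∈ n.divisors, (d : ℚ) := by
        rw [Finset.mul_sum, Finset.mul_sum, ← Finset.sum_add_distrib]
        exact Finset.sum_congr rfl (fun d _ => by ring)


/-- `W 1 1` as a sum over quadruples. -/
lemma W11_quad (N : ℕ) : W 1 1 N = ∑ q ∈ quad N, ((qa q : ℚ) * qb q) := by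
  have h1 : W 1 1 N = ∑ p ∈ (Finset.Icc 1 N ×ˢ Finset.Icc 1 N).filter
      (fun p => p.1 + p.2 = N),
      (ArithmeticFunction.sigma 1 p.1 : ℚ) * (ArithmeticFunction.sigma 1 p.2 : ℚ) := by
    rw [Finset.sum_filter, Finset.sum_product]
    unfold W
    refine Finset.sum_congr rfl fun l _ => Finset.sum_congr rfl fun m _ => ?_
    simp only [one_mul]
  rw [h1]
  have h2 : ∀ p ∈ (Finset.Icc 1 N ×ˢ Finset.Icc 1 N).filter (fun p => p.1 + p.2 = N),
      (ArithmeticFunction.sigma 1 p.1 : ℚ) * (ArithmeticFunction.sigma 1 p.2 : ℚ)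
      = ∑ r ∈ p.1.divisorsAntidiagonal ×ˢ p.2.divisorsAntidiagonal,
          ((r.1.1 : ℚ) * (r.2.1 : ℚ)) := by
    intro p _
    have e1 : (ArithmeticFunction.sigma 1 p.1 : ℚ)
        = ∑ u ∈ p.1.divisorsAntidiagonal, (u.1 : ℚ) := by
      rw [show (∑ u ∈ p.1.divisorsAntidiagonal, (u.1 : ℚ))
          = ∑ d ∈ p.1.divisors, (d : ℚ) from
        Nat.sum_divisorsAntidiagonal (fun a _ => (a : ℚ))]
      rw [ArithmeticFunction.sigma_one_apply]
      push_cast; rfl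
    have e2 : (ArithmeticFunction.sigma 1 p.2 : ℚ)
        = ∑ v ∈ p.2.divisorsAntidiagonal, (v.1 : ℚ) := by
      rw [show (∑ v ∈ p.2.divisorsAntidiagonal, (v.1 : ℚ))
          = ∑ d ∈ p.2.divisors, (d : ℚ) from
        Nat.sum_divisorsAntidiagonal (fun a _ => (a : ℚ))]
      rw [ArithmeticFunction.sigma_one_apply]
      push_cast; rfl
    rw [e1, e2, Finset.sum_mul_sum]
    exact (Finset.sum_product (s := p.1.divisorsAntidiagonal)
      (t := p.2.divisorsAntidiagonal)
      (f := fun r => ((r.1.1 : ℚ) * (r.2.1 : ℚ)))).symm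
  rw [Finset.sum_congr rfl h2]
  rw [Finset.sum_sigma' ((Finset.Icc 1 N ×ˢ Finset.Icc 1 N).filter (fun p => p.1 + p.2 = N))
      (fun p => p.1.divisorsAntidiagonal ×ˢ p.2.divisorsAntidiagonal)
      (fun _ r => ((r.1.1 : ℚ) * (r.2.1 : ℚ)))]
  refine Finset.sum_nbij' (fun r => (r.2.1.1, r.2.2.1, r.2.1.2, r.2.2.2))
    (fun q => ⟨(qa q * qx q, qb q * qy q), ((qa q, qx q), (qb q, qy q))⟩)
    ?_ ?_ ?_ ?_ ?_
  · rintro ⟨⟨l, m⟩, ⟨⟨a, x⟩, ⟨b, y⟩⟩⟩ hr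
    simp only [Finset.mem_sigma, Finset.mem_filter, Finset.mem_product,
      Nat.mem_divisorsAntidiagonal, Finset.mem_Icc] at hr
    obtain ⟨⟨⟨⟨hl1, hl2⟩, hm1, hm2⟩, hlm⟩, ⟨hax, hl0⟩, ⟨hby, hm0⟩⟩ := hr
    rw [mem_quad]
    simp only [qa, qb, qx, qy]
    have ha : 0 < a := by
      rcases Nat.eq_zero_or_pos a with rfl | h
      · rw [zero_mul] at hax; omega
      · exact h
    have hx : 0 < x := by
      rcases Nat.eq_zero_or_pos x with rfl | h
      · rw [mul_zero] at hax; omega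
      · exact h
    have hb : 0 < b := by
      rcases Nat.eq_zero_or_pos b with rfl | h
      · rw [zero_mul] at hby; omega
      · exact h
    have hy : 0 < y := by
      rcases Nat.eq_zero_or_pos y with rfl | h
      · rw [mul_zero] at hby; omega
      · exact h
    exact ⟨ha, hb, hx, hy, by omega⟩
  · rintro ⟨a, b, x, y⟩ hq
    rw [mem_quad] at hq
    simp only [qa, qb, qx, qy] at hq
    obtain ⟨ha, hb, hx, hy, he⟩ := hq
    simp only [Finset.mem_sigma, Finset.mem_filter, Finset.mem_product,
      Nat.mem_divisorsAntidiagonal, Finset.mem_Icc, qa, qb, qx, qy]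
    have h1 : 1 ≤ a * x := Nat.mul_pos ha hx
    have h2 : 1 ≤ b * y := Nat.mul_pos hb hy
    exact ⟨⟨⟨⟨h1, by omega⟩, h2, by omega⟩, he⟩, ⟨by trivial, by omega⟩, ⟨by trivial, by omega⟩⟩
  · rintro ⟨⟨l, m⟩, ⟨⟨a, x⟩, ⟨b, y⟩⟩⟩ hr
    simp only [Finset.mem_sigma, Finset.mem_filter, Finset.mem_product,
      Nat.mem_divisorsAntidiagonal, Finset.mem_Icc] at hr
    obtain ⟨⟨⟨⟨hl1, hl2⟩, hm1, hm2⟩, hlm⟩, ⟨hax, hl0⟩, ⟨hby, hm0⟩⟩ := hr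
    subst hax; subst hby
    rfl
  · rintro ⟨a, b, x, y⟩ _; rfl
  · rintro ⟨⟨l, m⟩, ⟨⟨a, x⟩, ⟨b, y⟩⟩⟩ _; rfl


lemma W_filter (a b n : ℕ) :
    W a b n = ∑ r ∈ (Finset.Icc 1 n ×ˢ Finset.Icc 1 n).filter
        (fun r => a * r.1 + b * r.2 = n),
      (ArithmeticFunction.sigma 1 r.1 : ℚ) * (ArithmeticFunction.sigma 1 r.2 : ℚ) := by
  rw [Finset.sum_filter, Finset.sum_product]
  rfl

lemma Wsymm (a b n : ℕ) : W a b n = W b a n := by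
  rw [W_filter, W_filter]
  refine Finset.sum_nbij' (fun r => (r.2, r.1)) (fun r => (r.2, r.1)) ?_ ?_ ?_ ?_ ?_ <;>
    rintro ⟨l, m⟩ hr <;>
    simp only [Finset.mem_filter, Finset.mem_product, Finset.mem_Icc] at * <;>
    first
      | (exact ⟨⟨hr.1.2, hr.1.1⟩, by omega⟩)
      | rfl
      | (rw [mul_comm])

lemma middle (a b n : ℕ) (ha : 0 < a) (hb : 0 < b) :
    ∑ p ∈ (Finset.HasAntidiagonal.antidiagonal n).filter (fun p => 0 < p.1 ∧ 0 < p.2),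
      sig 1 a p.1 * sig 1 b p.2 = W a b n := by
  rw [← Finset.sum_filter_of_ne (p := fun p => a ∣ p.1 ∧ b ∣ p.2)
    (fun x _ hne => by
      constructor
      · by_contra h
        apply hne
        rw [show sig 1 a x.1 = 0 from by simp [sig, h]]
        ring
      · by_contra h
        apply hne
        rw [show sig 1 b x.2 = 0 from by simp [sig, h]]
        ring)]
  rw [W_filter]
  refine Finset.sum_nbij' (fun p => (p.1 / a, p.2 / b)) (fun r => (a * r.1, b * r.2))
    ?_ ?_ ?_ ?_ ?_
  · rintro ⟨i, j⟩ hp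
    simp only [Finset.mem_filter, Finset.HasAntidiagonal.mem_antidiagonal] at hp
    obtain ⟨⟨hij, hi, hj⟩, hdvd⟩ := hp
    obtain ⟨hai, hbj⟩ := hdvd
    simp only [Finset.mem_filter, Finset.mem_product, Finset.mem_Icc]
    have h1 : 1 ≤ i / a := (Nat.one_le_div_iff ha).mpr (Nat.le_of_dvd hi hai)
    have h2 : 1 ≤ j / b := (Nat.one_le_div_iff hb).mpr (Nat.le_of_dvd hj hbj)
    have h3 : i / a ≤ n := le_trans (Nat.div_le_self _ _) (by omega)
    have h4 : j / b ≤ n := le_trans (Nat.div_le_self _ _) (by omega)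
    refine ⟨⟨⟨h1, h3⟩, h2, h4⟩, ?_⟩
    rw [Nat.mul_div_cancel' hai, Nat.mul_div_cancel' hbj]
    exact hij
  · rintro ⟨l, m⟩ hr
    simp only [Finset.mem_filter, Finset.mem_product, Finset.mem_Icc] at hr
    obtain ⟨⟨⟨hl1, hl2⟩, hm1, hm2⟩, he⟩ := hr
    simp only [Finset.mem_filter, Finset.HasAntidiagonal.mem_antidiagonal]
    exact ⟨⟨he, Nat.mul_pos ha hl1, Nat.mul_pos hb hm1⟩,
      Dvd.intro _ rfl, Dvd.intro _ rfl⟩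
  · rintro ⟨i, j⟩ hp
    simp only [Finset.mem_filter, Finset.HasAntidiagonal.mem_antidiagonal] at hp
    obtain ⟨⟨hij, hi, hj⟩, hdvd⟩ := hp
    obtain ⟨hai, hbj⟩ := hdvd
    simp only [Prod.mk.injEq]
    exact ⟨Nat.mul_div_cancel' hai, Nat.mul_div_cancel' hbj⟩
  · rintro ⟨l, m⟩ _
    simp only [Prod.mk.injEq]
    exact ⟨Nat.mul_div_cancel_left _ ha, Nat.mul_div_cancel_left _ hb⟩
  · rintro ⟨i, j⟩ hp
    simp only [Finset.mem_filter, Finset.HasAntidiagonal.mem_antidiagonal] at hp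
    obtain ⟨⟨hij, hi, hj⟩, hdvd⟩ := hp
    obtain ⟨hai, hbj⟩ := hdvd
    simp only [sig, if_pos hai, if_pos hbj]


lemma W11_besge (N : ℕ) :
    12 * W 1 1 N = 5 * (ArithmeticFunction.sigma 3 N : ℚ)
      + (1 - 6 * (N : ℚ)) * (ArithmeticFunction.sigma 1 N : ℚ) := by
  rw [W11_quad]
  exact besge_quad N

lemma Waa (a n : ℕ) (ha : 0 < a) :
    12 * (a : ℚ) * W a a n = (a : ℚ) * (5 * sig 3 a n + sig 1 a n)
      - 6 * (n : ℚ) * sig 1 a n := by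
  by_cases hd : a ∣ n
  · obtain ⟨N, rfl⟩ := hd
    have hquot : a * N / a = N := Nat.mul_div_cancel_left N ha
    have hsig3 : sig 3 a (a * N) = (ArithmeticFunction.sigma 3 N : ℚ) := by
      rw [sig, if_pos (dvd_mul_right a N), hquot]
    have hsig1 : sig 1 a (a * N) = (ArithmeticFunction.sigma 1 N : ℚ) := by
      rw [sig, if_pos (dvd_mul_right a N), hquot]
    have hW : W a a (a * N) = W 1 1 N := by
      have hcond : ∀ l m : ℕ, (a * l + a * m = a * N) ↔ (1 * l + 1 * m = N) := by
        intro l m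
        rw [one_mul, one_mul, ← Nat.left_distrib]
        exact ⟨fun h => Nat.eq_of_mul_eq_mul_left ha h, fun h => by rw [h]⟩
      have step1 : W a a (a * N) = ∑ l ∈ Finset.Icc 1 (a * N), ∑ m ∈ Finset.Icc 1 (a * N),
          if 1 * l + 1 * m = N then
            (ArithmeticFunction.sigma 1 l : ℚ) * (ArithmeticFunction.sigma 1 m : ℚ) else 0 := by
        unfold W
        exact Finset.sum_congr rfl fun l _ => Finset.sum_congr rfl fun m _ =>
          if_congr (hcond l m) rfl rfl
      rw [step1]
      have hsub : Finset.Icc 1 N ⊆ Finset.Icc 1 (a * N) :=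
        Finset.Icc_subset_Icc le_rfl (Nat.le_mul_of_pos_left N ha)
      have inner : ∀ l : ℕ, (∑ m ∈ Finset.Icc 1 (a * N),
          if 1 * l + 1 * m = N then
            (ArithmeticFunction.sigma 1 l : ℚ) * (ArithmeticFunction.sigma 1 m : ℚ) else 0)
          = ∑ m ∈ Finset.Icc 1 N,
          if 1 * l + 1 * m = N then
            (ArithmeticFunction.sigma 1 l : ℚ) * (ArithmeticFunction.sigma 1 m : ℚ) else 0 := by
        intro l
        refine (Finset.sum_subset hsub ?_).symm
        intro m hm hm'
        rw [Finset.mem_Icc] at hm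
        rw [Finset.mem_Icc] at hm'
        rw [if_neg]
        omega
      rw [Finset.sum_congr rfl fun l _ => inner l]
      refine (Finset.sum_subset hsub ?_).symm
      intro l hl hl'
      rw [Finset.mem_Icc] at hl
      rw [Finset.mem_Icc] at hl'
      refine Finset.sum_eq_zero fun m hm => ?_
      rw [Finset.mem_Icc] at hm
      rw [if_neg]
      omega
    rw [hW, hsig3, hsig1]
    have hb := W11_besge N
    push_cast
    linear_combination (a : ℚ) * hb
  · have h0 : W a a n = 0 := by
      refine Finset.sum_eq_zero fun l _ => Finset.sum_eq_zero fun m _ => ?_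
      rw [if_neg]
      intro h
      exact hd ⟨l + m, by rw [← h]; ring⟩
    have hs3 : sig 3 a n = 0 := if_neg hd
    have hs1 : sig 1 a n = 0 := if_neg hd
    rw [h0, hs3, hs1]
    ring

lemma coeffLt (t i : ℕ) :
    PowerSeries.coeff i (Lt t) = if i = 0 then 1 else -24 * sig 1 t i := by
  rw [Lt, PowerSeries.coeff_mk]
  by_cases hi : i = 0
  · rw [if_pos hi, if_pos hi]
  · rw [if_neg hi, if_neg hi, sig]
    by_cases hd : t ∣ i
    · rw [if_pos hd, if_pos hd]
    · rw [if_neg hd, if_neg hd]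
      ring


end LQ

open LQ in
theorem L_alpha_beta_sq (α β : ℕ) (hα : 0 < α) (hco : Nat.gcd α β = 1) (hlt : α < β) :
    PowerSeries.constantCoeff (((α : PowerSeries ℚ) * Lt α - (β : PowerSeries ℚ) * Lt β) ^ 2)
        = ((α : ℚ) - (β : ℚ)) ^ 2 ∧
    ∀ n : ℕ, 1 ≤ n →
      PowerSeries.coeff n (((α : PowerSeries ℚ) * Lt α - (β : PowerSeries ℚ) * Lt β) ^ 2) =
        240 * (α : ℚ) ^ 2 * sig 3 α n + 240 * (β : ℚ) ^ 2 * sig 3 β n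
        + 48 * (α : ℚ) * ((β : ℚ) - 6 * (n : ℚ)) * sig 1 α n
        + 48 * (β : ℚ) * ((α : ℚ) - 6 * (n : ℚ)) * sig 1 β n
        - 1152 * (α : ℚ) * (β : ℚ) * W α β n := by
  have hβ : 0 < β := lt_trans hα hlt
  set F : PowerSeries ℚ := (α : PowerSeries ℚ) * Lt α - (β : PowerSeries ℚ) * Lt β with hFdef
  have coeff_cast_mul : ∀ (t : ℕ) (i : ℕ) (f : PowerSeries ℚ),
      PowerSeries.coeff i ((t : PowerSeries ℚ) * f) = (t : ℚ) * PowerSeries.coeff i f := by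
    intro t i f
    rw [← map_natCast (PowerSeries.C (R := ℚ)) t, PowerSeries.coeff_C_mul]
  have coeffF : ∀ i : ℕ, PowerSeries.coeff i F
      = if i = 0 then (α : ℚ) - β
        else -24 * (α : ℚ) * sig 1 α i + 24 * (β : ℚ) * sig 1 β i := by
    intro i
    rw [hFdef, map_sub, coeff_cast_mul, coeff_cast_mul, coeffLt, coeffLt]
    by_cases hi : i = 0
    · rw [if_pos hi, if_pos hi, if_pos hi]
      ring
    · rw [if_neg hi, if_neg hi, if_neg hi]
      ring
  constructor
  · have h0 : PowerSeries.constantCoeff F = (α : ℚ) - β := by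
      rw [← PowerSeries.coeff_zero_eq_constantCoeff, coeffF, if_pos rfl]
    rw [pow_two, map_mul, h0, ← pow_two]
  · intro n hn
    have hn0 : n ≠ 0 := by omega
    rw [pow_two, PowerSeries.coeff_mul]
    -- split the antidiagonal
    have hset : (Finset.HasAntidiagonal.antidiagonal n).filter (fun p => ¬(0 < p.1 ∧ 0 < p.2))
        = {((0 : ℕ), n), (n, (0 : ℕ))} := by
      ext ⟨i, j⟩
      simp only [Finset.mem_filter, Finset.HasAntidiagonal.mem_antidiagonal, Finset.mem_insert,
        Finset.mem_singleton, Prod.mk.injEq]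
      omega
    have hsplit : ∑ p ∈ Finset.HasAntidiagonal.antidiagonal n,
          PowerSeries.coeff p.1 F * PowerSeries.coeff p.2 F
        = (∑ p ∈ (Finset.HasAntidiagonal.antidiagonal n).filter (fun p => 0 < p.1 ∧ 0 < p.2),
            PowerSeries.coeff p.1 F * PowerSeries.coeff p.2 F)
          + (PowerSeries.coeff 0 F * PowerSeries.coeff n F
            + PowerSeries.coeff n F * PowerSeries.coeff 0 F) := by
      rw [← Finset.sum_filter_add_sum_filter_not (Finset.HasAntidiagonal.antidiagonal n)
        (fun p => 0 < p.1 ∧ 0 < p.2), hset, Finset.sum_pair (by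
          intro h
          rw [Prod.mk.injEq] at h
          omega)]
    rw [hsplit]
    -- middle sums
    have hmid : ∑ p ∈ (Finset.HasAntidiagonal.antidiagonal n).filter (fun p => 0 < p.1 ∧ 0 < p.2),
          PowerSeries.coeff p.1 F * PowerSeries.coeff p.2 F
        = 576 * (α : ℚ)^2 * W α α n + 576 * (β : ℚ)^2 * W β β n
          - 576 * (α : ℚ) * (β : ℚ) * W α β n - 576 * (α : ℚ) * (β : ℚ) * W β α n := by
      rw [← middle α α n hα hα, ← middle β β n hβ hβ, ← middle α β n hα hβ,
        ← middle β α n hβ hα]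
      rw [Finset.mul_sum, Finset.mul_sum, Finset.mul_sum, Finset.mul_sum,
        ← Finset.sum_add_distrib, ← Finset.sum_sub_distrib, ← Finset.sum_sub_distrib]
      refine Finset.sum_congr rfl fun p hp => ?_
      rw [Finset.mem_filter] at hp
      rw [coeffF, coeffF, if_neg (by omega), if_neg (by omega)]
      ring
    rw [hmid, Wsymm β α n]
    rw [coeffF 0, coeffF n, if_pos rfl, if_neg hn0]
    have hWα := Waa α n hα
    have hWβ := Waa β n hβ
    linear_combination 48 * (α : ℚ) * hWα + 48 * (β : ℚ) * hWβ
end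
end

section
/- The fifteen formal power series A₁, …, A₁₅ ∈ ℚ⟦q⟧ are linearly independent over ℚ: if x₁, …, x₁₅ ∈ ℚ satisfy ∑_{i=1}^{15} x_i A_i = 0 in ℚ⟦q⟧, then x_i = 0 for all 1 ≤ i ≤ 15. -/
open scoped BigOperators
open Finset

noncomputable section

/-- Integer power of a formal power series (negative exponents via the inverse). -/
def zp (f : PowerSeries ℚ) (r : ℤ) : PowerSeries ℚ :=
  if 0 ≤ r then f ^ r.toNat else f⁻¹ ^ (-r).toNat

def d44 : Fin 6 → ℕ := ![1, 2, 4, 11, 22, 44]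

def r44 : Fin 15 → Fin 6 → ℤ :=
  ![![6, -2, 0, 6, -2, 0], ![4, 0, 0, 4, 0, 0], ![2, 2, 0, 2, 2, 0], ![0, 4, 0, 0, 4, 0],
    ![-2, 6, 0, -2, 6, 0], ![0, 2, 2, 0, 2, 2], ![0, -3, 5, 0, 5, 1], ![0, 0, 4, 0, 0, 4],
    ![3, 0, 1, -1, 0, 5], ![0, -2, 6, 0, -2, 6], ![1, -3, 4, -3, 5, 4], ![2, 0, 0, 2, -4, 8],
    ![0, 2, 0, 0, -2, 8], ![-3, 9, 0, 1, 1, 0], ![0, 0, 2, 0, -4, 10]]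

def e44 (i : Fin 15) : ℕ := ((∑ δ, (d44 δ : ℤ) * r44 i δ) / 24).toNat

/-- The eta quotient `A_{i+1} = q^{e_i} · ∏_{m≥1} ∏_{δ ∣ 44} (1 - q^{δ m})^{r(i,δ)}`; since the
factors with `δ m > n` do not affect the coefficient of `q^n`, the coefficient of `q^n` is
computed from the product truncated at `m ≤ n`. -/
def A (i : Fin 15) : PowerSeries ℚ :=
  PowerSeries.mk fun n =>
    PowerSeries.coeff n
      (PowerSeries.X ^ e44 i *
        ∏ m ∈ Finset.Icc 1 n, ∏ δ : Fin 6,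
          zp (1 - PowerSeries.X ^ (d44 δ * m)) (r44 i δ))

/-- `a i n` is the coefficient of `q^n` in `A_{i+1}`. -/
def a (i : Fin 15) (n : ℕ) : ℚ := PowerSeries.coeff n (A i)

/- ### Auxiliary machinery: computing coefficients via integer lists -/

def lget (l : List ℤ) (k : ℕ) : ℤ := l.getD k 0

def addL : List ℤ → List ℤ → List ℤ
  | [], l => l
  | a::as, [] => a::as
  | a::as, b::bs => (a+b) :: addL as bs

def mulL : List ℤ → List ℤ → List ℤ
  | [], _ => []
  | a::as, b => addL (b.map (fun x => a*x)) (0 :: mulL as b)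

def convL (N : ℕ) (x y : List ℤ) : List ℤ := (mulL x y).take (N+1)

def oneL (N : ℕ) : List ℤ := (List.range (N+1)).map (fun n => if n = 0 then 1 else 0)

/-- Multiplication with a short-circuit when the first factor is (the truncation of) `1`. -/
def convL' (N : ℕ) (x y : List ℤ) : List ℤ := if x = oneL N then y else convL N x y

def XpL (N e : ℕ) : List ℤ := (List.range (N+1)).map (fun n => if n = e then 1 else 0)

def polyL (N k : ℕ) : List ℤ :=
  (List.range (N+1)).map (fun n => (if n = 0 then (1:ℤ) else 0) - (if n = k then 1 else 0))

def geomL (N k : ℕ) : List ℤ := (List.range (N+1)).map (fun n => if k ∣ n then 1 else 0)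

def powL (N : ℕ) (a : List ℤ) : ℕ → List ℤ
  | 0 => oneL N
  | t+1 => convL N a (powL N a t)

def zpL (N k : ℕ) (r : ℤ) : List ℤ :=
  if N < k then oneL N
  else if 0 ≤ r then powL N (polyL N k) r.toNat else powL N (geomL N k) (-r).toNat

def RepL (N : ℕ) (f : PowerSeries ℚ) (l : List ℤ) : Prop :=
  ∀ k ≤ N, PowerSeries.coeff k f = (lget l k : ℚ)

/-- `IsOne N g` means `g ≡ 1` modulo `X^(N+1)`. -/
def IsOne (N : ℕ) (g : PowerSeries ℚ) : Prop :=
  ∀ k ≤ N, PowerSeries.coeff k g = if k = 0 then 1 else 0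

lemma lget_nil (k : ℕ) : lget [] k = 0 := by cases k <;> rfl

lemma lget_addL (a b : List ℤ) (k : ℕ) : lget (addL a b) k = lget a k + lget b k := by
  induction a generalizing b k with
  | nil => rw [addL, lget_nil]; ring
  | cons x xs ih =>
    cases b with
    | nil => rw [addL, lget_nil]; ring
    | cons y ys => cases k with
      | zero => rfl
      | succ k => exact ih ys k

lemma lget_map_mul (a : ℤ) (b : List ℤ) (k : ℕ) :
    lget (b.map (fun x => a*x)) k = a * lget b k := by
  induction b generalizing k with
  | nil => rw [List.map_nil, lget_nil]; ring
  | cons y ys ih => cases k with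
    | zero => rfl
    | succ k => exact ih k

lemma lget_mulL (x y : List ℤ) (k : ℕ) :
    lget (mulL x y) k = ∑ i ∈ Finset.range (k+1), lget x i * lget y (k-i) := by
  induction x generalizing k with
  | nil => rw [mulL, lget_nil]; exact (Finset.sum_eq_zero fun i _ => by rw [lget_nil]; ring).symm
  | cons a as ih =>
    rw [mulL, lget_addL, lget_map_mul, Finset.sum_range_succ']
    cases k with
    | zero => simp [lget]
    | succ k =>
      have h1 : lget (0 :: mulL as y) (k+1) = lget (mulL as y) k := rfl
      rw [h1, ih k]
      have h2 : ∀ i ∈ Finset.range (k+1), lget as i * lget y (k-i)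
          = lget (a :: as) (i+1) * lget y (k+1-(i+1)) := by
        intro i hi; simp [lget, Nat.succ_sub_succ]
      rw [Finset.sum_congr rfl h2]
      have h3 : lget (a :: as) 0 * lget y (k+1-0) = a * lget y (k+1) := rfl
      rw [h3]; ring

lemma lget_take : ∀ {l : List ℤ} {k N : ℕ}, k ≤ N → lget (l.take (N+1)) k = lget l k
  | [], _, _, _ => by rfl
  | x::xs, 0, N, h => by rw [List.take_succ_cons]; rfl
  | x::xs, k+1, N, h => by
      cases N with
      | zero => omega
      | succ N =>
        rw [List.take_succ_cons]
        exact lget_take (by omega)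

lemma lget_convL {x y : List ℤ} {k N : ℕ} (h : k ≤ N) :
    lget (convL N x y) k = ∑ i ∈ Finset.range (k+1), lget x i * lget y (k-i) := by
  rw [convL, lget_take h, lget_mulL]

lemma lget_map_range {f : ℕ → ℤ} {k N : ℕ} (h : k ≤ N) :
    lget ((List.range (N+1)).map f) k = f k := by
  rw [lget, List.getD_eq_getElem?_getD, List.getElem?_map, List.getElem?_range (by omega)]
  rfl

lemma repl_one (N : ℕ) : RepL N 1 (oneL N) := by
  intro k hk
  rw [oneL, lget_map_range hk, PowerSeries.coeff_one]
  split <;> simp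

lemma repl_Xp (N e : ℕ) : RepL N (PowerSeries.X ^ e) (XpL N e) := by
  intro k hk
  rw [XpL, lget_map_range hk, PowerSeries.coeff_X_pow]
  split <;> simp

lemma repl_poly (N j : ℕ) : RepL N (1 - PowerSeries.X ^ j) (polyL N j) := by
  intro k hk
  rw [polyL, lget_map_range hk, map_sub, PowerSeries.coeff_one, PowerSeries.coeff_X_pow]
  push_cast
  split <;> split <;> simp

lemma repl_mul {N : ℕ} {f g : PowerSeries ℚ} {l m : List ℤ}
    (hf : RepL N f l) (hg : RepL N g m) : RepL N (f * g) (convL N l m) := by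
  intro k hk
  rw [lget_convL hk, PowerSeries.coeff_mul,
    Finset.Nat.sum_antidiagonal_eq_sum_range_succ_mk]
  push_cast
  refine Finset.sum_congr rfl fun i hi => ?_
  have hi' : i ≤ k := by simpa using Finset.mem_range_succ_iff.mp hi
  rw [hf i (le_trans hi' hk), hg (k - i) (le_trans (Nat.sub_le _ _) hk)]

lemma repl_pow {N : ℕ} {f : PowerSeries ℚ} {l : List ℤ} (hf : RepL N f l) :
    ∀ t : ℕ, RepL N (f ^ t) (powL N l t)
  | 0 => by rw [pow_zero]; exact repl_one N
  | t+1 => by rw [pow_succ, mul_comm]; exact repl_mul hf (repl_pow hf t)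

lemma geom_inv (j : ℕ) (hj : 1 ≤ j) :
    (1 - PowerSeries.X ^ j : PowerSeries ℚ)⁻¹ =
      PowerSeries.mk (fun t => if j ∣ t then (1:ℚ) else 0) := by
  rw [PowerSeries.inv_eq_iff_mul_eq_one]
  · ext n
    rw [show (PowerSeries.mk (fun t => if j ∣ t then (1:ℚ) else 0)) * (1 - PowerSeries.X ^ j)
        = PowerSeries.mk (fun t => if j ∣ t then (1:ℚ) else 0)
          - PowerSeries.X ^ j * PowerSeries.mk (fun t => if j ∣ t then (1:ℚ) else 0) by ring]
    rw [map_sub, PowerSeries.coeff_mk, PowerSeries.coeff_X_pow_mul', PowerSeries.coeff_one]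
    by_cases h1 : j ≤ n
    · rw [if_pos h1, PowerSeries.coeff_mk]
      have hd : j ∣ n ↔ j ∣ n - j := by
        constructor
        · intro h; exact (Nat.dvd_sub h dvd_rfl)
        · intro h; have := Nat.dvd_add h (dvd_refl j); rwa [Nat.sub_add_cancel h1] at this
      have hn0 : n ≠ 0 := by omega
      rw [if_neg hn0]
      by_cases h2 : j ∣ n
      · rw [if_pos h2, if_pos (hd.mp h2)]; ring
      · rw [if_neg h2, if_neg (fun c => h2 (hd.mpr c))]; ring
    · rw [if_neg h1, sub_zero]
      by_cases hn0 : n = 0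
      · simp [hn0]
      · rw [if_neg hn0, if_neg (fun c => h1 (Nat.le_of_dvd (Nat.pos_of_ne_zero hn0) c))]
  · simp [map_sub, map_pow, PowerSeries.constantCoeff_X, zero_pow (by omega : j ≠ 0)]

lemma repl_geom (N j : ℕ) (hj : 1 ≤ j) :
    RepL N (1 - PowerSeries.X ^ j : PowerSeries ℚ)⁻¹ (geomL N j) := by
  intro k hk
  rw [geom_inv j hj, PowerSeries.coeff_mk, geomL, lget_map_range hk]
  split <;> simp

/- ### IsOne lemmas -/

lemma coeff_mul_isOne {N : ℕ} {f q : PowerSeries ℚ} (hq : IsOne N q) :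
    ∀ k ≤ N, PowerSeries.coeff k (f * q) = PowerSeries.coeff k f := by
  intro k hk
  rw [PowerSeries.coeff_mul, Finset.Nat.sum_antidiagonal_eq_sum_range_succ_mk]
  rw [Finset.sum_eq_single_of_mem k (Finset.self_mem_range_succ k)]
  · rw [hq (k - k) (by omega), Nat.sub_self, if_pos rfl, mul_one]
  · intro i hi hne
    have hi' : i < k := by
      have := Finset.mem_range_succ_iff.mp hi
      omega
    rw [hq (k - i) (by omega), if_neg (by omega), mul_zero]

lemma isOne_one (N : ℕ) : IsOne N 1 := by
  intro k hk
  rw [PowerSeries.coeff_one]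

lemma isOne_mul {N : ℕ} {f g : PowerSeries ℚ} (hf : IsOne N f) (hg : IsOne N g) :
    IsOne N (f * g) := by
  intro k hk
  rw [coeff_mul_isOne hg k hk, hf k hk]

lemma isOne_poly {N j : ℕ} (h : N < j) : IsOne N (1 - PowerSeries.X ^ j) := by
  intro k hk
  rw [map_sub, PowerSeries.coeff_one, PowerSeries.coeff_X_pow,
    if_neg (show ¬ k = j by omega), sub_zero]

lemma isOne_geom {N j : ℕ} (hj : 1 ≤ j) (h : N < j) :
    IsOne N (1 - PowerSeries.X ^ j : PowerSeries ℚ)⁻¹ := by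
  intro k hk
  rw [geom_inv j hj, PowerSeries.coeff_mk]
  by_cases hk0 : k = 0
  · simp [hk0]
  · rw [if_neg hk0, if_neg (fun c => hk0 (by
      rcases Nat.eq_zero_or_pos k with h0 | h0
      · exact h0
      · exact absurd (Nat.le_of_dvd h0 c) (by omega)))]

lemma isOne_pow {N : ℕ} {f : PowerSeries ℚ} (hf : IsOne N f) : ∀ t : ℕ, IsOne N (f ^ t)
  | 0 => by rw [pow_zero]; exact isOne_one N
  | t+1 => by rw [pow_succ]; exact isOne_mul (isOne_pow hf t) hf

lemma isOne_zp {N j : ℕ} (hj : 1 ≤ j) (h : N < j) (r : ℤ) :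
    IsOne N (zp (1 - PowerSeries.X ^ j) r) := by
  rw [zp]
  split
  · exact isOne_pow (isOne_poly h) _
  · exact isOne_pow (isOne_geom hj h) _

lemma isOne_prod {N : ℕ} {ι : Type*} (s : Finset ι) (F : ι → PowerSeries ℚ)
    (h : ∀ x ∈ s, IsOne N (F x)) : IsOne N (∏ x ∈ s, F x) := by
  classical
  induction s using Finset.induction_on with
  | empty => simpa using isOne_one N
  | insert _ _ hx ih =>
    rw [Finset.prod_insert hx]
    exact isOne_mul (h _ (Finset.mem_insert_self _ _))
      (ih fun x hxs => h x (Finset.mem_insert_of_mem hxs))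

/- ### RepL for zp, short-circuit mul, products -/

lemma repl_of_isOne {N : ℕ} {f : PowerSeries ℚ} (hf : IsOne N f) : RepL N f (oneL N) := by
  intro k hk
  rw [hf k hk, oneL, lget_map_range hk]
  split <;> simp

lemma isOne_of_repl_oneL {N : ℕ} {f : PowerSeries ℚ} (hf : RepL N f (oneL N)) : IsOne N f := by
  intro k hk
  rw [hf k hk, oneL, lget_map_range hk]
  split <;> simp

lemma repl_zp (N j : ℕ) (hj : 1 ≤ j) (r : ℤ) :
    RepL N (zp (1 - PowerSeries.X ^ j) r) (zpL N j r) := by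
  rw [zpL]
  by_cases hNj : N < j
  · rw [if_pos hNj]
    exact repl_of_isOne (isOne_zp hj hNj r)
  rw [if_neg hNj, zp]
  by_cases h : 0 ≤ r
  · rw [if_pos h, if_pos h]; exact repl_pow (repl_poly N j) _
  · rw [if_neg h, if_neg h]; exact repl_pow (repl_geom N j hj) _

lemma repl_mul' {N : ℕ} {f g : PowerSeries ℚ} {l m : List ℤ}
    (hf : RepL N f l) (hg : RepL N g m) : RepL N (f * g) (convL' N l m) := by
  rw [convL']
  split
  · subst ‹l = oneL N›
    intro k hk
    rw [mul_comm, coeff_mul_isOne (isOne_of_repl_oneL hf) k hk]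
    exact hg k hk
  · exact repl_mul hf hg

lemma repl_list_prod {N : ℕ} {ι : Type*} (F : ι → PowerSeries ℚ) (G : ι → List ℤ) :
    ∀ L : List ι, (∀ x ∈ L, RepL N (F x) (G x)) →
      RepL N ((L.map F).prod) ((L.map G).foldr (convL' N) (oneL N))
  | [], _ => by simpa using repl_one N
  | x :: L, h => by
      simp only [List.map_cons, List.prod_cons, List.foldr_cons]
      exact repl_mul' (h x (by simp)) (repl_list_prod F G L (fun y hy => h y (by simp [hy])))

lemma prod_Icc_list {M : Type*} [CommMonoid M] (f : ℕ → M) (a b : ℕ) :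
    ∏ m ∈ Finset.Icc a b, f m = ((List.range' a (b+1-a)).map f).prod := by
  rw [Nat.Icc_eq_range', Finset.prod]
  simp [Multiset.map_coe, Multiset.prod_coe]

/- ### The list-level computation of the coefficients of `A i` -/

def AL (N : ℕ) (i : Fin 15) : List ℤ :=
  convL N (XpL N (e44 i))
    ((((List.range' 1 N).map fun m =>
        (((List.finRange 6).map fun δ =>
            zpL N (d44 δ * m) (r44 i δ)).foldr (convL' N) (oneL N))).foldr
      (convL' N) (oneL N)))

lemma d44_pos (δ : Fin 6) : 1 ≤ d44 δ := by fin_cases δ <;> decide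

lemma Icc_succ_eq_Ioc (c k : ℕ) : Finset.Icc (c+1) k = Finset.Ioc c k := by
  ext t; simp only [Finset.mem_Icc, Finset.mem_Ioc]; omega

lemma key (i : Fin 15) (n N : ℕ) (hn : n ≤ N) : a i n = (lget (AL N i) n : ℚ) := by
  classical
  have hsplit : (∏ m ∈ Finset.Icc 1 N, ∏ δ : Fin 6,
        zp (1 - PowerSeries.X ^ (d44 δ * m)) (r44 i δ))
      = (∏ m ∈ Finset.Icc 1 n, ∏ δ : Fin 6,
          zp (1 - PowerSeries.X ^ (d44 δ * m)) (r44 i δ))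
        * ∏ m ∈ Finset.Icc (n+1) N, ∏ δ : Fin 6,
            zp (1 - PowerSeries.X ^ (d44 δ * m)) (r44 i δ) := by
    rw [show (1:ℕ) = 0 + 1 from rfl, Icc_succ_eq_Ioc, Icc_succ_eq_Ioc, Icc_succ_eq_Ioc]
    exact (Finset.prod_Ioc_consecutive
      (fun m => ∏ δ : Fin 6, zp (1 - PowerSeries.X ^ (d44 δ * m)) (r44 i δ))
      (Nat.zero_le n) hn).symm
  have htail : IsOne n (∏ m ∈ Finset.Icc (n+1) N, ∏ δ : Fin 6,
      zp (1 - PowerSeries.X ^ (d44 δ * m)) (r44 i δ)) := by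
    apply isOne_prod
    intro m hm
    have hm1 : n + 1 ≤ m := (Finset.mem_Icc.mp hm).1
    apply isOne_prod
    intro δ _
    refine isOne_zp (Nat.one_le_iff_ne_zero.mpr
      (Nat.mul_ne_zero (by have := d44_pos δ; omega) (by omega))) ?_ _
    calc n < m := by omega
    _ ≤ d44 δ * m := Nat.le_mul_of_pos_left m (d44_pos δ)
  have hrep : RepL N (PowerSeries.X ^ e44 i * ∏ m ∈ Finset.Icc 1 N, ∏ δ : Fin 6,
      zp (1 - PowerSeries.X ^ (d44 δ * m)) (r44 i δ)) (AL N i) := by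
    apply repl_mul (repl_Xp N (e44 i))
    rw [prod_Icc_list]
    have hNN : N + 1 - 1 = N := by omega
    rw [hNN]
    apply repl_list_prod
    intro m hm
    have hm1 : 1 ≤ m := by
      have := List.mem_range'_1.mp hm
      omega
    have inner : RepL N (∏ δ : Fin 6, zp (1 - PowerSeries.X ^ (d44 δ * m)) (r44 i δ))
        (((List.finRange 6).map fun δ => zpL N (d44 δ * m) (r44 i δ)).foldr
          (convL' N) (oneL N)) := by
      rw [Fin.prod_univ_def]
      apply repl_list_prod
      intro δ _
      exact repl_zp N _ (Nat.one_le_iff_ne_zero.mpr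
        (Nat.mul_ne_zero (by have := d44_pos δ; omega) (by omega))) _
    exact inner
  have step : a i n = PowerSeries.coeff n
      (PowerSeries.X ^ e44 i * ∏ m ∈ Finset.Icc 1 N, ∏ δ : Fin 6,
        zp (1 - PowerSeries.X ^ (d44 δ * m)) (r44 i δ)) := by
    rw [a, A, PowerSeries.coeff_mk, hsplit, ← mul_assoc]
    exact (coeff_mul_isOne htail n le_rfl).symm
  rw [step, hrep n hn]

lemma a_eq_zero {i : Fin 15} {n : ℕ} (h : n < e44 i) : a i n = 0 := by
  rw [a, A, PowerSeries.coeff_mk, PowerSeries.coeff_X_pow_mul', if_neg (by omega)]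

lemma a_pivot (i : Fin 15) : a i (e44 i) = 1 := by
  rw [a, A, PowerSeries.coeff_mk, PowerSeries.coeff_X_pow_mul', if_pos le_rfl, Nat.sub_self]
  have h1 : IsOne 0 (∏ m ∈ Finset.Icc 1 (e44 i), ∏ δ : Fin 6,
      zp (1 - PowerSeries.X ^ (d44 δ * m)) (r44 i δ)) := by
    apply isOne_prod
    intro m hm
    have hm1 : 1 ≤ m := (Finset.mem_Icc.mp hm).1
    apply isOne_prod
    intro δ _
    have := d44_pos δ
    exact isOne_zp (Nat.one_le_iff_ne_zero.mpr
      (Nat.mul_ne_zero (by have := d44_pos δ; omega) (by omega)))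
      (Nat.mul_pos (d44_pos δ) hm1) _
  rw [h1 0 le_rfl, if_pos rfl]
lemma sum15 (f : Fin 15 → ℚ) : ∑ i, f i = f ⟨0, by omega⟩ + (f ⟨1, by omega⟩ + (f ⟨2, by omega⟩ + (f ⟨3, by omega⟩ + (f ⟨4, by omega⟩ + (f ⟨5, by omega⟩ + (f ⟨6, by omega⟩ + (f ⟨7, by omega⟩ + (f ⟨8, by omega⟩ + (f ⟨9, by omega⟩ + (f ⟨10, by omega⟩ + (f ⟨11, by omega⟩ + (f ⟨12, by omega⟩ + (f ⟨13, by omega⟩ + (f ⟨14, by omega⟩)))))))))))))) := by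
  simp only [Fin.sum_univ_succ, Fin.sum_univ_zero, add_zero]
  rfl

set_option maxRecDepth 100000 in
set_option maxHeartbeats 1000000 in
lemma hrow1 : AL 14 ⟨1, by omega⟩ = [0, 0, 1, -4, 2, 8, -5, -4, -10, 8, 9, 0, 14, -20, 6] := by decide

set_option maxRecDepth 100000 in
set_option maxHeartbeats 1000000 in
lemma hrow2 : AL 14 ⟨2, by omega⟩ = [0, 0, 0, 1, -2, -3, 6, 2, 0, -1, -10, 0, -2, 10, 4] := by decide

set_option maxRecDepth 100000 in
set_option maxHeartbeats 1000000 in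
lemma hrow3 : AL 14 ⟨3, by omega⟩ = [0, 0, 0, 0, 1, 0, -4, 0, 2, 0, 8, 0, -5, 0, -4] := by decide

set_option maxRecDepth 100000 in
set_option maxHeartbeats 1000000 in
lemma hrow4 : AL 14 ⟨4, by omega⟩ = [0, 0, 0, 0, 0, 1, 2, -1, -2, -1, -6, 0, 4, -5, 4] := by decide

set_option maxRecDepth 100000 in
set_option maxHeartbeats 1000000 in
lemma hrow5 : AL 14 ⟨5, by omega⟩ = [0, 0, 0, 0, 0, 0, 1, 0, -2, 0, -3, 0, 6, 0, 2] := by decide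

set_option maxRecDepth 100000 in
set_option maxHeartbeats 1000000 in
lemma hrow6 : AL 14 ⟨6, by omega⟩ = [0, 0, 0, 0, 0, 0, 0, 1, 0, 3, 0, 4, 0, 7, 0] := by decide

set_option maxRecDepth 100000 in
set_option maxHeartbeats 1000000 in
lemma hrow7 : AL 14 ⟨7, by omega⟩ = [0, 0, 0, 0, 0, 0, 0, 0, 1, 0, 0, 0, -4, 0, 0] := by decide

set_option maxRecDepth 100000 in
set_option maxHeartbeats 1000000 in
lemma hrow8 : AL 14 ⟨8, by omega⟩ = [0, 0, 0, 0, 0, 0, 0, 0, 0, 1, -3, 0, 5, -1, 3] := by decide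

set_option maxRecDepth 100000 in
set_option maxHeartbeats 1000000 in
lemma hrow9 : AL 14 ⟨9, by omega⟩ = [0, 0, 0, 0, 0, 0, 0, 0, 0, 0, 1, 0, 2, 0, -1] := by decide

set_option maxRecDepth 100000 in
set_option maxHeartbeats 1000000 in
lemma hrow10 : AL 14 ⟨10, by omega⟩ = [0, 0, 0, 0, 0, 0, 0, 0, 0, 0, 0, 1, -1, 2, -3] := by decide

set_option maxRecDepth 100000 in
set_option maxHeartbeats 1000000 in
lemma hrow11 : AL 14 ⟨11, by omega⟩ = [0, 0, 0, 0, 0, 0, 0, 0, 0, 0, 0, 0, 1, -2, -1] := by decide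

set_option maxRecDepth 100000 in
set_option maxHeartbeats 1000000 in
lemma hrow12 : AL 14 ⟨12, by omega⟩ = [0, 0, 0, 0, 0, 0, 0, 0, 0, 0, 0, 0, 0, 1, 0] := by decide

set_option maxRecDepth 100000 in
set_option maxHeartbeats 1000000 in
lemma hrow13 : AL 14 ⟨13, by omega⟩ = [0, 0, 1, 3, 0, -5, -3, -9, -7, 15, 0, 0, 30, -1, 2] := by decide

lemma v1_1 : a ⟨1, by omega⟩ 1 = (0 : ℚ) := by
  rw [key _ 1 14 (by omega), hrow1]; norm_num [lget]

lemma v1_2 : a ⟨1, by omega⟩ 2 = (1 : ℚ) := by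
  rw [key _ 2 14 (by omega), hrow1]; norm_num [lget]

lemma v1_3 : a ⟨1, by omega⟩ 3 = (-4 : ℚ) := by
  rw [key _ 3 14 (by omega), hrow1]; norm_num [lget]

lemma v1_4 : a ⟨1, by omega⟩ 4 = (2 : ℚ) := by
  rw [key _ 4 14 (by omega), hrow1]; norm_num [lget]

lemma v1_5 : a ⟨1, by omega⟩ 5 = (8 : ℚ) := by
  rw [key _ 5 14 (by omega), hrow1]; norm_num [lget]

lemma v1_6 : a ⟨1, by omega⟩ 6 = (-5 : ℚ) := by
  rw [key _ 6 14 (by omega), hrow1]; norm_num [lget]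

lemma v1_7 : a ⟨1, by omega⟩ 7 = (-4 : ℚ) := by
  rw [key _ 7 14 (by omega), hrow1]; norm_num [lget]

lemma v1_8 : a ⟨1, by omega⟩ 8 = (-10 : ℚ) := by
  rw [key _ 8 14 (by omega), hrow1]; norm_num [lget]

lemma v1_9 : a ⟨1, by omega⟩ 9 = (8 : ℚ) := by
  rw [key _ 9 14 (by omega), hrow1]; norm_num [lget]

lemma v1_10 : a ⟨1, by omega⟩ 10 = (9 : ℚ) := by
  rw [key _ 10 14 (by omega), hrow1]; norm_num [lget]

lemma v1_11 : a ⟨1, by omega⟩ 11 = (0 : ℚ) := by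
  rw [key _ 11 14 (by omega), hrow1]; norm_num [lget]

lemma v1_12 : a ⟨1, by omega⟩ 12 = (14 : ℚ) := by
  rw [key _ 12 14 (by omega), hrow1]; norm_num [lget]

lemma v1_13 : a ⟨1, by omega⟩ 13 = (-20 : ℚ) := by
  rw [key _ 13 14 (by omega), hrow1]; norm_num [lget]

lemma v1_14 : a ⟨1, by omega⟩ 14 = (6 : ℚ) := by
  rw [key _ 14 14 (by omega), hrow1]; norm_num [lget]

lemma v2_1 : a ⟨2, by omega⟩ 1 = (0 : ℚ) := by
  rw [key _ 1 14 (by omega), hrow2]; norm_num [lget]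

lemma v2_2 : a ⟨2, by omega⟩ 2 = (0 : ℚ) := by
  rw [key _ 2 14 (by omega), hrow2]; norm_num [lget]

lemma v2_3 : a ⟨2, by omega⟩ 3 = (1 : ℚ) := by
  rw [key _ 3 14 (by omega), hrow2]; norm_num [lget]

lemma v2_4 : a ⟨2, by omega⟩ 4 = (-2 : ℚ) := by
  rw [key _ 4 14 (by omega), hrow2]; norm_num [lget]

lemma v2_5 : a ⟨2, by omega⟩ 5 = (-3 : ℚ) := by
  rw [key _ 5 14 (by omega), hrow2]; norm_num [lget]

lemma v2_6 : a ⟨2, by omega⟩ 6 = (6 : ℚ) := by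
  rw [key _ 6 14 (by omega), hrow2]; norm_num [lget]

lemma v2_7 : a ⟨2, by omega⟩ 7 = (2 : ℚ) := by
  rw [key _ 7 14 (by omega), hrow2]; norm_num [lget]

lemma v2_8 : a ⟨2, by omega⟩ 8 = (0 : ℚ) := by
  rw [key _ 8 14 (by omega), hrow2]; norm_num [lget]

lemma v2_9 : a ⟨2, by omega⟩ 9 = (-1 : ℚ) := by
  rw [key _ 9 14 (by omega), hrow2]; norm_num [lget]

lemma v2_10 : a ⟨2, by omega⟩ 10 = (-10 : ℚ) := by
  rw [key _ 10 14 (by omega), hrow2]; norm_num [lget]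

lemma v2_11 : a ⟨2, by omega⟩ 11 = (0 : ℚ) := by
  rw [key _ 11 14 (by omega), hrow2]; norm_num [lget]

lemma v2_12 : a ⟨2, by omega⟩ 12 = (-2 : ℚ) := by
  rw [key _ 12 14 (by omega), hrow2]; norm_num [lget]

lemma v2_13 : a ⟨2, by omega⟩ 13 = (10 : ℚ) := by
  rw [key _ 13 14 (by omega), hrow2]; norm_num [lget]

lemma v2_14 : a ⟨2, by omega⟩ 14 = (4 : ℚ) := by
  rw [key _ 14 14 (by omega), hrow2]; norm_num [lget]

lemma v3_1 : a ⟨3, by omega⟩ 1 = (0 : ℚ) := by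
  rw [key _ 1 14 (by omega), hrow3]; norm_num [lget]

lemma v3_2 : a ⟨3, by omega⟩ 2 = (0 : ℚ) := by
  rw [key _ 2 14 (by omega), hrow3]; norm_num [lget]

lemma v3_3 : a ⟨3, by omega⟩ 3 = (0 : ℚ) := by
  rw [key _ 3 14 (by omega), hrow3]; norm_num [lget]

lemma v3_4 : a ⟨3, by omega⟩ 4 = (1 : ℚ) := by
  rw [key _ 4 14 (by omega), hrow3]; norm_num [lget]

lemma v3_5 : a ⟨3, by omega⟩ 5 = (0 : ℚ) := by
  rw [key _ 5 14 (by omega), hrow3]; norm_num [lget]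

lemma v3_6 : a ⟨3, by omega⟩ 6 = (-4 : ℚ) := by
  rw [key _ 6 14 (by omega), hrow3]; norm_num [lget]

lemma v3_7 : a ⟨3, by omega⟩ 7 = (0 : ℚ) := by
  rw [key _ 7 14 (by omega), hrow3]; norm_num [lget]

lemma v3_8 : a ⟨3, by omega⟩ 8 = (2 : ℚ) := by
  rw [key _ 8 14 (by omega), hrow3]; norm_num [lget]

lemma v3_9 : a ⟨3, by omega⟩ 9 = (0 : ℚ) := by
  rw [key _ 9 14 (by omega), hrow3]; norm_num [lget]

lemma v3_10 : a ⟨3, by omega⟩ 10 = (8 : ℚ) := by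
  rw [key _ 10 14 (by omega), hrow3]; norm_num [lget]

lemma v3_11 : a ⟨3, by omega⟩ 11 = (0 : ℚ) := by
  rw [key _ 11 14 (by omega), hrow3]; norm_num [lget]

lemma v3_12 : a ⟨3, by omega⟩ 12 = (-5 : ℚ) := by
  rw [key _ 12 14 (by omega), hrow3]; norm_num [lget]

lemma v3_13 : a ⟨3, by omega⟩ 13 = (0 : ℚ) := by
  rw [key _ 13 14 (by omega), hrow3]; norm_num [lget]

lemma v3_14 : a ⟨3, by omega⟩ 14 = (-4 : ℚ) := by
  rw [key _ 14 14 (by omega), hrow3]; norm_num [lget]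

lemma v4_1 : a ⟨4, by omega⟩ 1 = (0 : ℚ) := by
  rw [key _ 1 14 (by omega), hrow4]; norm_num [lget]

lemma v4_2 : a ⟨4, by omega⟩ 2 = (0 : ℚ) := by
  rw [key _ 2 14 (by omega), hrow4]; norm_num [lget]

lemma v4_3 : a ⟨4, by omega⟩ 3 = (0 : ℚ) := by
  rw [key _ 3 14 (by omega), hrow4]; norm_num [lget]

lemma v4_4 : a ⟨4, by omega⟩ 4 = (0 : ℚ) := by
  rw [key _ 4 14 (by omega), hrow4]; norm_num [lget]

lemma v4_5 : a ⟨4, by omega⟩ 5 = (1 : ℚ) := by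
  rw [key _ 5 14 (by omega), hrow4]; norm_num [lget]

lemma v4_6 : a ⟨4, by omega⟩ 6 = (2 : ℚ) := by
  rw [key _ 6 14 (by omega), hrow4]; norm_num [lget]

lemma v4_7 : a ⟨4, by omega⟩ 7 = (-1 : ℚ) := by
  rw [key _ 7 14 (by omega), hrow4]; norm_num [lget]

lemma v4_8 : a ⟨4, by omega⟩ 8 = (-2 : ℚ) := by
  rw [key _ 8 14 (by omega), hrow4]; norm_num [lget]

lemma v4_9 : a ⟨4, by omega⟩ 9 = (-1 : ℚ) := by
  rw [key _ 9 14 (by omega), hrow4]; norm_num [lget]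

lemma v4_10 : a ⟨4, by omega⟩ 10 = (-6 : ℚ) := by
  rw [key _ 10 14 (by omega), hrow4]; norm_num [lget]

lemma v4_11 : a ⟨4, by omega⟩ 11 = (0 : ℚ) := by
  rw [key _ 11 14 (by omega), hrow4]; norm_num [lget]

lemma v4_12 : a ⟨4, by omega⟩ 12 = (4 : ℚ) := by
  rw [key _ 12 14 (by omega), hrow4]; norm_num [lget]

lemma v4_13 : a ⟨4, by omega⟩ 13 = (-5 : ℚ) := by
  rw [key _ 13 14 (by omega), hrow4]; norm_num [lget]

lemma v4_14 : a ⟨4, by omega⟩ 14 = (4 : ℚ) := by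
  rw [key _ 14 14 (by omega), hrow4]; norm_num [lget]

lemma v5_1 : a ⟨5, by omega⟩ 1 = (0 : ℚ) := by
  rw [key _ 1 14 (by omega), hrow5]; norm_num [lget]

lemma v5_2 : a ⟨5, by omega⟩ 2 = (0 : ℚ) := by
  rw [key _ 2 14 (by omega), hrow5]; norm_num [lget]

lemma v5_3 : a ⟨5, by omega⟩ 3 = (0 : ℚ) := by
  rw [key _ 3 14 (by omega), hrow5]; norm_num [lget]

lemma v5_4 : a ⟨5, by omega⟩ 4 = (0 : ℚ) := by
  rw [key _ 4 14 (by omega), hrow5]; norm_num [lget]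

lemma v5_5 : a ⟨5, by omega⟩ 5 = (0 : ℚ) := by
  rw [key _ 5 14 (by omega), hrow5]; norm_num [lget]

lemma v5_6 : a ⟨5, by omega⟩ 6 = (1 : ℚ) := by
  rw [key _ 6 14 (by omega), hrow5]; norm_num [lget]

lemma v5_7 : a ⟨5, by omega⟩ 7 = (0 : ℚ) := by
  rw [key _ 7 14 (by omega), hrow5]; norm_num [lget]

lemma v5_8 : a ⟨5, by omega⟩ 8 = (-2 : ℚ) := by
  rw [key _ 8 14 (by omega), hrow5]; norm_num [lget]

lemma v5_9 : a ⟨5, by omega⟩ 9 = (0 : ℚ) := by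
  rw [key _ 9 14 (by omega), hrow5]; norm_num [lget]

lemma v5_10 : a ⟨5, by omega⟩ 10 = (-3 : ℚ) := by
  rw [key _ 10 14 (by omega), hrow5]; norm_num [lget]

lemma v5_11 : a ⟨5, by omega⟩ 11 = (0 : ℚ) := by
  rw [key _ 11 14 (by omega), hrow5]; norm_num [lget]

lemma v5_12 : a ⟨5, by omega⟩ 12 = (6 : ℚ) := by
  rw [key _ 12 14 (by omega), hrow5]; norm_num [lget]

lemma v5_13 : a ⟨5, by omega⟩ 13 = (0 : ℚ) := by
  rw [key _ 13 14 (by omega), hrow5]; norm_num [lget]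

lemma v5_14 : a ⟨5, by omega⟩ 14 = (2 : ℚ) := by
  rw [key _ 14 14 (by omega), hrow5]; norm_num [lget]

lemma v6_1 : a ⟨6, by omega⟩ 1 = (0 : ℚ) := by
  rw [key _ 1 14 (by omega), hrow6]; norm_num [lget]

lemma v6_2 : a ⟨6, by omega⟩ 2 = (0 : ℚ) := by
  rw [key _ 2 14 (by omega), hrow6]; norm_num [lget]

lemma v6_3 : a ⟨6, by omega⟩ 3 = (0 : ℚ) := by
  rw [key _ 3 14 (by omega), hrow6]; norm_num [lget]

lemma v6_4 : a ⟨6, by omega⟩ 4 = (0 : ℚ) := by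
  rw [key _ 4 14 (by omega), hrow6]; norm_num [lget]

lemma v6_5 : a ⟨6, by omega⟩ 5 = (0 : ℚ) := by
  rw [key _ 5 14 (by omega), hrow6]; norm_num [lget]

lemma v6_6 : a ⟨6, by omega⟩ 6 = (0 : ℚ) := by
  rw [key _ 6 14 (by omega), hrow6]; norm_num [lget]

lemma v6_7 : a ⟨6, by omega⟩ 7 = (1 : ℚ) := by
  rw [key _ 7 14 (by omega), hrow6]; norm_num [lget]

lemma v6_8 : a ⟨6, by omega⟩ 8 = (0 : ℚ) := by
  rw [key _ 8 14 (by omega), hrow6]; norm_num [lget]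

lemma v6_9 : a ⟨6, by omega⟩ 9 = (3 : ℚ) := by
  rw [key _ 9 14 (by omega), hrow6]; norm_num [lget]

lemma v6_10 : a ⟨6, by omega⟩ 10 = (0 : ℚ) := by
  rw [key _ 10 14 (by omega), hrow6]; norm_num [lget]

lemma v6_11 : a ⟨6, by omega⟩ 11 = (4 : ℚ) := by
  rw [key _ 11 14 (by omega), hrow6]; norm_num [lget]

lemma v6_12 : a ⟨6, by omega⟩ 12 = (0 : ℚ) := by
  rw [key _ 12 14 (by omega), hrow6]; norm_num [lget]

lemma v6_13 : a ⟨6, by omega⟩ 13 = (7 : ℚ) := by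
  rw [key _ 13 14 (by omega), hrow6]; norm_num [lget]

lemma v6_14 : a ⟨6, by omega⟩ 14 = (0 : ℚ) := by
  rw [key _ 14 14 (by omega), hrow6]; norm_num [lget]

lemma v7_1 : a ⟨7, by omega⟩ 1 = (0 : ℚ) := by
  rw [key _ 1 14 (by omega), hrow7]; norm_num [lget]

lemma v7_2 : a ⟨7, by omega⟩ 2 = (0 : ℚ) := by
  rw [key _ 2 14 (by omega), hrow7]; norm_num [lget]

lemma v7_3 : a ⟨7, by omega⟩ 3 = (0 : ℚ) := by
  rw [key _ 3 14 (by omega), hrow7]; norm_num [lget]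

lemma v7_4 : a ⟨7, by omega⟩ 4 = (0 : ℚ) := by
  rw [key _ 4 14 (by omega), hrow7]; norm_num [lget]

lemma v7_5 : a ⟨7, by omega⟩ 5 = (0 : ℚ) := by
  rw [key _ 5 14 (by omega), hrow7]; norm_num [lget]

lemma v7_6 : a ⟨7, by omega⟩ 6 = (0 : ℚ) := by
  rw [key _ 6 14 (by omega), hrow7]; norm_num [lget]

lemma v7_7 : a ⟨7, by omega⟩ 7 = (0 : ℚ) := by
  rw [key _ 7 14 (by omega), hrow7]; norm_num [lget]

lemma v7_8 : a ⟨7, by omega⟩ 8 = (1 : ℚ) := by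
  rw [key _ 8 14 (by omega), hrow7]; norm_num [lget]

lemma v7_9 : a ⟨7, by omega⟩ 9 = (0 : ℚ) := by
  rw [key _ 9 14 (by omega), hrow7]; norm_num [lget]

lemma v7_10 : a ⟨7, by omega⟩ 10 = (0 : ℚ) := by
  rw [key _ 10 14 (by omega), hrow7]; norm_num [lget]

lemma v7_11 : a ⟨7, by omega⟩ 11 = (0 : ℚ) := by
  rw [key _ 11 14 (by omega), hrow7]; norm_num [lget]

lemma v7_12 : a ⟨7, by omega⟩ 12 = (-4 : ℚ) := by
  rw [key _ 12 14 (by omega), hrow7]; norm_num [lget]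

lemma v7_13 : a ⟨7, by omega⟩ 13 = (0 : ℚ) := by
  rw [key _ 13 14 (by omega), hrow7]; norm_num [lget]

lemma v7_14 : a ⟨7, by omega⟩ 14 = (0 : ℚ) := by
  rw [key _ 14 14 (by omega), hrow7]; norm_num [lget]

lemma v8_1 : a ⟨8, by omega⟩ 1 = (0 : ℚ) := by
  rw [key _ 1 14 (by omega), hrow8]; norm_num [lget]

lemma v8_2 : a ⟨8, by omega⟩ 2 = (0 : ℚ) := by
  rw [key _ 2 14 (by omega), hrow8]; norm_num [lget]

lemma v8_3 : a ⟨8, by omega⟩ 3 = (0 : ℚ) := by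
  rw [key _ 3 14 (by omega), hrow8]; norm_num [lget]

lemma v8_4 : a ⟨8, by omega⟩ 4 = (0 : ℚ) := by
  rw [key _ 4 14 (by omega), hrow8]; norm_num [lget]

lemma v8_5 : a ⟨8, by omega⟩ 5 = (0 : ℚ) := by
  rw [key _ 5 14 (by omega), hrow8]; norm_num [lget]

lemma v8_6 : a ⟨8, by omega⟩ 6 = (0 : ℚ) := by
  rw [key _ 6 14 (by omega), hrow8]; norm_num [lget]

lemma v8_7 : a ⟨8, by omega⟩ 7 = (0 : ℚ) := by
  rw [key _ 7 14 (by omega), hrow8]; norm_num [lget]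

lemma v8_8 : a ⟨8, by omega⟩ 8 = (0 : ℚ) := by
  rw [key _ 8 14 (by omega), hrow8]; norm_num [lget]

lemma v8_9 : a ⟨8, by omega⟩ 9 = (1 : ℚ) := by
  rw [key _ 9 14 (by omega), hrow8]; norm_num [lget]

lemma v8_10 : a ⟨8, by omega⟩ 10 = (-3 : ℚ) := by
  rw [key _ 10 14 (by omega), hrow8]; norm_num [lget]

lemma v8_11 : a ⟨8, by omega⟩ 11 = (0 : ℚ) := by
  rw [key _ 11 14 (by omega), hrow8]; norm_num [lget]

lemma v8_12 : a ⟨8, by omega⟩ 12 = (5 : ℚ) := by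
  rw [key _ 12 14 (by omega), hrow8]; norm_num [lget]

lemma v8_13 : a ⟨8, by omega⟩ 13 = (-1 : ℚ) := by
  rw [key _ 13 14 (by omega), hrow8]; norm_num [lget]

lemma v8_14 : a ⟨8, by omega⟩ 14 = (3 : ℚ) := by
  rw [key _ 14 14 (by omega), hrow8]; norm_num [lget]

lemma v9_1 : a ⟨9, by omega⟩ 1 = (0 : ℚ) := by
  rw [key _ 1 14 (by omega), hrow9]; norm_num [lget]

lemma v9_2 : a ⟨9, by omega⟩ 2 = (0 : ℚ) := by
  rw [key _ 2 14 (by omega), hrow9]; norm_num [lget]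

lemma v9_3 : a ⟨9, by omega⟩ 3 = (0 : ℚ) := by
  rw [key _ 3 14 (by omega), hrow9]; norm_num [lget]

lemma v9_4 : a ⟨9, by omega⟩ 4 = (0 : ℚ) := by
  rw [key _ 4 14 (by omega), hrow9]; norm_num [lget]

lemma v9_5 : a ⟨9, by omega⟩ 5 = (0 : ℚ) := by
  rw [key _ 5 14 (by omega), hrow9]; norm_num [lget]

lemma v9_6 : a ⟨9, by omega⟩ 6 = (0 : ℚ) := by
  rw [key _ 6 14 (by omega), hrow9]; norm_num [lget]

lemma v9_7 : a ⟨9, by omega⟩ 7 = (0 : ℚ) := by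
  rw [key _ 7 14 (by omega), hrow9]; norm_num [lget]

lemma v9_8 : a ⟨9, by omega⟩ 8 = (0 : ℚ) := by
  rw [key _ 8 14 (by omega), hrow9]; norm_num [lget]

lemma v9_9 : a ⟨9, by omega⟩ 9 = (0 : ℚ) := by
  rw [key _ 9 14 (by omega), hrow9]; norm_num [lget]

lemma v9_10 : a ⟨9, by omega⟩ 10 = (1 : ℚ) := by
  rw [key _ 10 14 (by omega), hrow9]; norm_num [lget]

lemma v9_11 : a ⟨9, by omega⟩ 11 = (0 : ℚ) := by
  rw [key _ 11 14 (by omega), hrow9]; norm_num [lget]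

lemma v9_12 : a ⟨9, by omega⟩ 12 = (2 : ℚ) := by
  rw [key _ 12 14 (by omega), hrow9]; norm_num [lget]

lemma v9_13 : a ⟨9, by omega⟩ 13 = (0 : ℚ) := by
  rw [key _ 13 14 (by omega), hrow9]; norm_num [lget]

lemma v9_14 : a ⟨9, by omega⟩ 14 = (-1 : ℚ) := by
  rw [key _ 14 14 (by omega), hrow9]; norm_num [lget]

lemma v10_1 : a ⟨10, by omega⟩ 1 = (0 : ℚ) := by
  rw [key _ 1 14 (by omega), hrow10]; norm_num [lget]

lemma v10_2 : a ⟨10, by omega⟩ 2 = (0 : ℚ) := by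
  rw [key _ 2 14 (by omega), hrow10]; norm_num [lget]

lemma v10_3 : a ⟨10, by omega⟩ 3 = (0 : ℚ) := by
  rw [key _ 3 14 (by omega), hrow10]; norm_num [lget]

lemma v10_4 : a ⟨10, by omega⟩ 4 = (0 : ℚ) := by
  rw [key _ 4 14 (by omega), hrow10]; norm_num [lget]

lemma v10_5 : a ⟨10, by omega⟩ 5 = (0 : ℚ) := by
  rw [key _ 5 14 (by omega), hrow10]; norm_num [lget]

lemma v10_6 : a ⟨10, by omega⟩ 6 = (0 : ℚ) := by
  rw [key _ 6 14 (by omega), hrow10]; norm_num [lget]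

lemma v10_7 : a ⟨10, by omega⟩ 7 = (0 : ℚ) := by
  rw [key _ 7 14 (by omega), hrow10]; norm_num [lget]

lemma v10_8 : a ⟨10, by omega⟩ 8 = (0 : ℚ) := by
  rw [key _ 8 14 (by omega), hrow10]; norm_num [lget]

lemma v10_9 : a ⟨10, by omega⟩ 9 = (0 : ℚ) := by
  rw [key _ 9 14 (by omega), hrow10]; norm_num [lget]

lemma v10_10 : a ⟨10, by omega⟩ 10 = (0 : ℚ) := by
  rw [key _ 10 14 (by omega), hrow10]; norm_num [lget]

lemma v10_11 : a ⟨10, by omega⟩ 11 = (1 : ℚ) := by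
  rw [key _ 11 14 (by omega), hrow10]; norm_num [lget]

lemma v10_12 : a ⟨10, by omega⟩ 12 = (-1 : ℚ) := by
  rw [key _ 12 14 (by omega), hrow10]; norm_num [lget]

lemma v10_13 : a ⟨10, by omega⟩ 13 = (2 : ℚ) := by
  rw [key _ 13 14 (by omega), hrow10]; norm_num [lget]

lemma v10_14 : a ⟨10, by omega⟩ 14 = (-3 : ℚ) := by
  rw [key _ 14 14 (by omega), hrow10]; norm_num [lget]

lemma v11_1 : a ⟨11, by omega⟩ 1 = (0 : ℚ) := by
  rw [key _ 1 14 (by omega), hrow11]; norm_num [lget]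

lemma v11_2 : a ⟨11, by omega⟩ 2 = (0 : ℚ) := by
  rw [key _ 2 14 (by omega), hrow11]; norm_num [lget]

lemma v11_3 : a ⟨11, by omega⟩ 3 = (0 : ℚ) := by
  rw [key _ 3 14 (by omega), hrow11]; norm_num [lget]

lemma v11_4 : a ⟨11, by omega⟩ 4 = (0 : ℚ) := by
  rw [key _ 4 14 (by omega), hrow11]; norm_num [lget]

lemma v11_5 : a ⟨11, by omega⟩ 5 = (0 : ℚ) := by
  rw [key _ 5 14 (by omega), hrow11]; norm_num [lget]

lemma v11_6 : a ⟨11, by omega⟩ 6 = (0 : ℚ) := by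
  rw [key _ 6 14 (by omega), hrow11]; norm_num [lget]

lemma v11_7 : a ⟨11, by omega⟩ 7 = (0 : ℚ) := by
  rw [key _ 7 14 (by omega), hrow11]; norm_num [lget]

lemma v11_8 : a ⟨11, by omega⟩ 8 = (0 : ℚ) := by
  rw [key _ 8 14 (by omega), hrow11]; norm_num [lget]

lemma v11_9 : a ⟨11, by omega⟩ 9 = (0 : ℚ) := by
  rw [key _ 9 14 (by omega), hrow11]; norm_num [lget]

lemma v11_10 : a ⟨11, by omega⟩ 10 = (0 : ℚ) := by
  rw [key _ 10 14 (by omega), hrow11]; norm_num [lget]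

lemma v11_11 : a ⟨11, by omega⟩ 11 = (0 : ℚ) := by
  rw [key _ 11 14 (by omega), hrow11]; norm_num [lget]

lemma v11_12 : a ⟨11, by omega⟩ 12 = (1 : ℚ) := by
  rw [key _ 12 14 (by omega), hrow11]; norm_num [lget]

lemma v11_13 : a ⟨11, by omega⟩ 13 = (-2 : ℚ) := by
  rw [key _ 13 14 (by omega), hrow11]; norm_num [lget]

lemma v11_14 : a ⟨11, by omega⟩ 14 = (-1 : ℚ) := by
  rw [key _ 14 14 (by omega), hrow11]; norm_num [lget]

lemma v12_1 : a ⟨12, by omega⟩ 1 = (0 : ℚ) := by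
  rw [key _ 1 14 (by omega), hrow12]; norm_num [lget]

lemma v12_2 : a ⟨12, by omega⟩ 2 = (0 : ℚ) := by
  rw [key _ 2 14 (by omega), hrow12]; norm_num [lget]

lemma v12_3 : a ⟨12, by omega⟩ 3 = (0 : ℚ) := by
  rw [key _ 3 14 (by omega), hrow12]; norm_num [lget]

lemma v12_4 : a ⟨12, by omega⟩ 4 = (0 : ℚ) := by
  rw [key _ 4 14 (by omega), hrow12]; norm_num [lget]

lemma v12_5 : a ⟨12, by omega⟩ 5 = (0 : ℚ) := by
  rw [key _ 5 14 (by omega), hrow12]; norm_num [lget]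

lemma v12_6 : a ⟨12, by omega⟩ 6 = (0 : ℚ) := by
  rw [key _ 6 14 (by omega), hrow12]; norm_num [lget]

lemma v12_7 : a ⟨12, by omega⟩ 7 = (0 : ℚ) := by
  rw [key _ 7 14 (by omega), hrow12]; norm_num [lget]

lemma v12_8 : a ⟨12, by omega⟩ 8 = (0 : ℚ) := by
  rw [key _ 8 14 (by omega), hrow12]; norm_num [lget]

lemma v12_9 : a ⟨12, by omega⟩ 9 = (0 : ℚ) := by
  rw [key _ 9 14 (by omega), hrow12]; norm_num [lget]

lemma v12_10 : a ⟨12, by omega⟩ 10 = (0 : ℚ) := by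
  rw [key _ 10 14 (by omega), hrow12]; norm_num [lget]

lemma v12_11 : a ⟨12, by omega⟩ 11 = (0 : ℚ) := by
  rw [key _ 11 14 (by omega), hrow12]; norm_num [lget]

lemma v12_12 : a ⟨12, by omega⟩ 12 = (0 : ℚ) := by
  rw [key _ 12 14 (by omega), hrow12]; norm_num [lget]

lemma v12_13 : a ⟨12, by omega⟩ 13 = (1 : ℚ) := by
  rw [key _ 13 14 (by omega), hrow12]; norm_num [lget]

lemma v12_14 : a ⟨12, by omega⟩ 14 = (0 : ℚ) := by
  rw [key _ 14 14 (by omega), hrow12]; norm_num [lget]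

lemma v13_1 : a ⟨13, by omega⟩ 1 = (0 : ℚ) := by
  rw [key _ 1 14 (by omega), hrow13]; norm_num [lget]

lemma v13_2 : a ⟨13, by omega⟩ 2 = (1 : ℚ) := by
  rw [key _ 2 14 (by omega), hrow13]; norm_num [lget]

lemma v13_3 : a ⟨13, by omega⟩ 3 = (3 : ℚ) := by
  rw [key _ 3 14 (by omega), hrow13]; norm_num [lget]

lemma v13_4 : a ⟨13, by omega⟩ 4 = (0 : ℚ) := by
  rw [key _ 4 14 (by omega), hrow13]; norm_num [lget]

lemma v13_5 : a ⟨13, by omega⟩ 5 = (-5 : ℚ) := by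
  rw [key _ 5 14 (by omega), hrow13]; norm_num [lget]

lemma v13_6 : a ⟨13, by omega⟩ 6 = (-3 : ℚ) := by
  rw [key _ 6 14 (by omega), hrow13]; norm_num [lget]

lemma v13_7 : a ⟨13, by omega⟩ 7 = (-9 : ℚ) := by
  rw [key _ 7 14 (by omega), hrow13]; norm_num [lget]

lemma v13_8 : a ⟨13, by omega⟩ 8 = (-7 : ℚ) := by
  rw [key _ 8 14 (by omega), hrow13]; norm_num [lget]

lemma v13_9 : a ⟨13, by omega⟩ 9 = (15 : ℚ) := by
  rw [key _ 9 14 (by omega), hrow13]; norm_num [lget]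

lemma v13_10 : a ⟨13, by omega⟩ 10 = (0 : ℚ) := by
  rw [key _ 10 14 (by omega), hrow13]; norm_num [lget]

lemma v13_11 : a ⟨13, by omega⟩ 11 = (0 : ℚ) := by
  rw [key _ 11 14 (by omega), hrow13]; norm_num [lget]

lemma v13_12 : a ⟨13, by omega⟩ 12 = (30 : ℚ) := by
  rw [key _ 12 14 (by omega), hrow13]; norm_num [lget]

lemma v13_13 : a ⟨13, by omega⟩ 13 = (-1 : ℚ) := by
  rw [key _ 13 14 (by omega), hrow13]; norm_num [lget]

lemma v13_14 : a ⟨13, by omega⟩ 14 = (2 : ℚ) := by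
  rw [key _ 14 14 (by omega), hrow13]; norm_num [lget]

lemma he0 : e44 ⟨0, by omega⟩ = 1 := by decide

lemma he14 : e44 ⟨14, by omega⟩ = 15 := by decide

lemma v0_1 : a ⟨0, by omega⟩ 1 = 1 := by rw [← he0]; exact a_pivot _

lemma v14_15 : a ⟨14, by omega⟩ 15 = 1 := by
  have := a_pivot ⟨14, by omega⟩
  rwa [he14] at this

lemma z14_1 : a ⟨14, by omega⟩ 1 = 0 := a_eq_zero (by rw [he14]; omega)

lemma z14_2 : a ⟨14, by omega⟩ 2 = 0 := a_eq_zero (by rw [he14]; omega)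

lemma z14_3 : a ⟨14, by omega⟩ 3 = 0 := a_eq_zero (by rw [he14]; omega)

lemma z14_4 : a ⟨14, by omega⟩ 4 = 0 := a_eq_zero (by rw [he14]; omega)

lemma z14_5 : a ⟨14, by omega⟩ 5 = 0 := a_eq_zero (by rw [he14]; omega)

lemma z14_6 : a ⟨14, by omega⟩ 6 = 0 := a_eq_zero (by rw [he14]; omega)

lemma z14_7 : a ⟨14, by omega⟩ 7 = 0 := a_eq_zero (by rw [he14]; omega)

lemma z14_8 : a ⟨14, by omega⟩ 8 = 0 := a_eq_zero (by rw [he14]; omega)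

lemma z14_9 : a ⟨14, by omega⟩ 9 = 0 := a_eq_zero (by rw [he14]; omega)

lemma z14_10 : a ⟨14, by omega⟩ 10 = 0 := a_eq_zero (by rw [he14]; omega)

lemma z14_11 : a ⟨14, by omega⟩ 11 = 0 := a_eq_zero (by rw [he14]; omega)

lemma z14_12 : a ⟨14, by omega⟩ 12 = 0 := a_eq_zero (by rw [he14]; omega)

lemma z14_13 : a ⟨14, by omega⟩ 13 = 0 := a_eq_zero (by rw [he14]; omega)

lemma z14_14 : a ⟨14, by omega⟩ 14 = 0 := a_eq_zero (by rw [he14]; omega)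

theorem A_linearIndependent (x : Fin 15 → ℚ)
    (h : ∑ i, x i • A i = 0) : ∀ i, x i = 0 := by
  have hx : ∀ n : ℕ, ∑ j, x j * a j n = 0 := by
    intro n
    have hc := congrArg (PowerSeries.coeff n) h
    rw [map_sum, map_zero] at hc
    simpa [a, smul_eq_mul] using hc
  have E1 := hx 1
  simp only [sum15] at E1
  simp only [v0_1, v1_1, v2_1, v3_1, v4_1, v5_1, v6_1, v7_1, v8_1, v9_1, v10_1, v11_1, v12_1, v13_1, z14_1] at E1
  have X0 : x ⟨0, by omega⟩ = 0 := by linear_combination E1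
  have E2 := hx 2
  simp only [sum15] at E2
  simp only [X0, zero_mul, zero_add, v1_2, v2_2, v3_2, v4_2, v5_2, v6_2, v7_2, v8_2, v9_2, v10_2, v11_2, v12_2, v13_2, z14_2] at E2
  have E3 := hx 3
  simp only [sum15] at E3
  simp only [X0, zero_mul, zero_add, v1_3, v2_3, v3_3, v4_3, v5_3, v6_3, v7_3, v8_3, v9_3, v10_3, v11_3, v12_3, v13_3, z14_3] at E3
  have E4 := hx 4
  simp only [sum15] at E4
  simp only [X0, zero_mul, zero_add, v1_4, v2_4, v3_4, v4_4, v5_4, v6_4, v7_4, v8_4, v9_4, v10_4, v11_4, v12_4, v13_4, z14_4] at E4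
  have E5 := hx 5
  simp only [sum15] at E5
  simp only [X0, zero_mul, zero_add, v1_5, v2_5, v3_5, v4_5, v5_5, v6_5, v7_5, v8_5, v9_5, v10_5, v11_5, v12_5, v13_5, z14_5] at E5
  have E6 := hx 6
  simp only [sum15] at E6
  simp only [X0, zero_mul, zero_add, v1_6, v2_6, v3_6, v4_6, v5_6, v6_6, v7_6, v8_6, v9_6, v10_6, v11_6, v12_6, v13_6, z14_6] at E6
  have E7 := hx 7
  simp only [sum15] at E7
  simp only [X0, zero_mul, zero_add, v1_7, v2_7, v3_7, v4_7, v5_7, v6_7, v7_7, v8_7, v9_7, v10_7, v11_7, v12_7, v13_7, z14_7] at E7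
  have E8 := hx 8
  simp only [sum15] at E8
  simp only [X0, zero_mul, zero_add, v1_8, v2_8, v3_8, v4_8, v5_8, v6_8, v7_8, v8_8, v9_8, v10_8, v11_8, v12_8, v13_8, z14_8] at E8
  have E9 := hx 9
  simp only [sum15] at E9
  simp only [X0, zero_mul, zero_add, v1_9, v2_9, v3_9, v4_9, v5_9, v6_9, v7_9, v8_9, v9_9, v10_9, v11_9, v12_9, v13_9, z14_9] at E9
  have E10 := hx 10
  simp only [sum15] at E10
  simp only [X0, zero_mul, zero_add, v1_10, v2_10, v3_10, v4_10, v5_10, v6_10, v7_10, v8_10, v9_10, v10_10, v11_10, v12_10, v13_10, z14_10] at E10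
  have E11 := hx 11
  simp only [sum15] at E11
  simp only [X0, zero_mul, zero_add, v1_11, v2_11, v3_11, v4_11, v5_11, v6_11, v7_11, v8_11, v9_11, v10_11, v11_11, v12_11, v13_11, z14_11] at E11
  have E12 := hx 12
  simp only [sum15] at E12
  simp only [X0, zero_mul, zero_add, v1_12, v2_12, v3_12, v4_12, v5_12, v6_12, v7_12, v8_12, v9_12, v10_12, v11_12, v12_12, v13_12, z14_12] at E12
  have E13 := hx 13
  simp only [sum15] at E13
  simp only [X0, zero_mul, zero_add, v1_13, v2_13, v3_13, v4_13, v5_13, v6_13, v7_13, v8_13, v9_13, v10_13, v11_13, v12_13, v13_13, z14_13] at E13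
  have E14 := hx 14
  simp only [sum15] at E14
  simp only [X0, zero_mul, zero_add, v1_14, v2_14, v3_14, v4_14, v5_14, v6_14, v7_14, v8_14, v9_14, v10_14, v11_14, v12_14, v13_14, z14_14] at E14
  have X1 : x ⟨1, by omega⟩ = 0 := by linear_combination ((104 : ℚ)/99) * E2 + ((-3 : ℚ)/44) * E3 + ((-1 : ℚ)/132) * E4 + ((1 : ℚ)/66) * E5 + ((-1 : ℚ)/132) * E6 + ((17 : ℚ)/396) * E7 + ((1 : ℚ)/99) * E8 + ((-1 : ℚ)/36) * E9 + ((-1 : ℚ)/396) * E10 + ((1 : ℚ)/99) * E11 + ((1 : ℚ)/396) * E12 + ((1 : ℚ)/396) * E14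
  have X2 : x ⟨2, by omega⟩ = 0 := by linear_combination ((431 : ℚ)/99) * E2 + ((23 : ℚ)/44) * E3 + ((-7 : ℚ)/132) * E4 + ((7 : ℚ)/66) * E5 + ((-7 : ℚ)/132) * E6 + ((119 : ℚ)/396) * E7 + ((7 : ℚ)/99) * E8 + ((-7 : ℚ)/36) * E9 + ((-7 : ℚ)/396) * E10 + ((7 : ℚ)/99) * E11 + ((7 : ℚ)/396) * E12 + ((7 : ℚ)/396) * E14
  have X3 : x ⟨3, by omega⟩ = 0 := by linear_combination ((218 : ℚ)/33) * E2 + ((13 : ℚ)/11) * E3 + ((10 : ℚ)/11) * E4 + ((2 : ℚ)/11) * E5 + ((-1 : ℚ)/11) * E6 + ((17 : ℚ)/33) * E7 + ((4 : ℚ)/33) * E8 + ((-1 : ℚ)/3) * E9 + ((-1 : ℚ)/33) * E10 + ((4 : ℚ)/33) * E11 + ((1 : ℚ)/33) * E12 + ((1 : ℚ)/33) * E14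
  have X4 : x ⟨4, by omega⟩ = 0 := by linear_combination ((436 : ℚ)/99) * E2 + ((27 : ℚ)/11) * E3 + ((-2 : ℚ)/33) * E4 + ((37 : ℚ)/33) * E5 + ((-2 : ℚ)/33) * E6 + ((34 : ℚ)/99) * E7 + ((8 : ℚ)/99) * E8 + ((-2 : ℚ)/9) * E9 + ((-2 : ℚ)/99) * E10 + ((8 : ℚ)/99) * E11 + ((2 : ℚ)/99) * E12 + ((2 : ℚ)/99) * E14
  have X5 : x ⟨5, by omega⟩ = 0 := by linear_combination ((-337 : ℚ)/99) * E2 + ((-38 : ℚ)/11) * E3 + ((134 : ℚ)/33) * E4 + ((-70 : ℚ)/33) * E5 + ((35 : ℚ)/33) * E6 + ((-34 : ℚ)/99) * E7 + ((-8 : ℚ)/99) * E8 + ((2 : ℚ)/9) * E9 + ((2 : ℚ)/99) * E10 + ((-8 : ℚ)/99) * E11 + ((-2 : ℚ)/99) * E12 + ((-2 : ℚ)/99) * E14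
  have X6 : x ⟨6, by omega⟩ = 0 := by linear_combination ((-5 : ℚ)/9) * E2 + ((7 : ℚ)/4) * E3 + ((1 : ℚ)/12) * E4 + ((5 : ℚ)/6) * E5 + ((1 : ℚ)/12) * E6 + ((19 : ℚ)/36) * E7 + ((-1 : ℚ)/9) * E8 + ((11 : ℚ)/36) * E9 + ((1 : ℚ)/36) * E10 + ((-1 : ℚ)/9) * E11 + ((-1 : ℚ)/36) * E12 + ((-1 : ℚ)/36) * E14
  have X7 : x ⟨7, by omega⟩ = 0 := by linear_combination ((-35 : ℚ)/33) * E2 + ((-201 : ℚ)/44) * E3 + ((271 : ℚ)/44) * E4 + ((-51 : ℚ)/22) * E5 + ((95 : ℚ)/44) * E6 + ((-119 : ℚ)/132) * E7 + ((26 : ℚ)/33) * E8 + ((7 : ℚ)/12) * E9 + ((7 : ℚ)/132) * E10 + ((-7 : ℚ)/33) * E11 + ((-7 : ℚ)/132) * E12 + ((-7 : ℚ)/132) * E14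
  have X8 : x ⟨8, by omega⟩ = 0 := by linear_combination ((25 : ℚ)/9) * E2 + ((-11 : ℚ)/4) * E3 + ((-5 : ℚ)/12) * E4 + ((-7 : ℚ)/6) * E5 + ((-5 : ℚ)/12) * E6 + ((-23 : ℚ)/36) * E7 + ((5 : ℚ)/9) * E8 + ((-19 : ℚ)/36) * E9 + ((-5 : ℚ)/36) * E10 + ((5 : ℚ)/9) * E11 + ((5 : ℚ)/36) * E12 + ((5 : ℚ)/36) * E14
  have X9 : x ⟨9, by omega⟩ = 0 := by linear_combination ((52 : ℚ)/9) * E2 + ((-15 : ℚ)/2) * E3 + ((17 : ℚ)/6) * E4 + ((-11 : ℚ)/3) * E5 + ((11 : ℚ)/6) * E6 + ((-43 : ℚ)/18) * E7 + ((14 : ℚ)/9) * E8 + ((-23 : ℚ)/18) * E9 + ((11 : ℚ)/18) * E10 + ((14 : ℚ)/9) * E11 + ((7 : ℚ)/18) * E12 + ((7 : ℚ)/18) * E14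
  have X10 : x ⟨10, by omega⟩ = 0 := by linear_combination ((20 : ℚ)/9) * E2 + (-7 : ℚ) * E3 + ((-1 : ℚ)/3) * E4 + ((-10 : ℚ)/3) * E5 + ((-1 : ℚ)/3) * E6 + ((-19 : ℚ)/9) * E7 + ((4 : ℚ)/9) * E8 + ((-11 : ℚ)/9) * E9 + ((-1 : ℚ)/9) * E10 + ((13 : ℚ)/9) * E11 + ((1 : ℚ)/9) * E12 + ((1 : ℚ)/9) * E14
  have X11 : x ⟨11, by omega⟩ = 0 := by linear_combination ((35 : ℚ)/9) * E2 + ((81 : ℚ)/4) * E3 + ((11 : ℚ)/12) * E4 + ((61 : ℚ)/6) * E5 + ((-1 : ℚ)/12) * E6 + ((245 : ℚ)/36) * E7 + ((-11 : ℚ)/9) * E8 + ((121 : ℚ)/36) * E9 + ((-25 : ℚ)/36) * E10 + ((-38 : ℚ)/9) * E11 + ((-11 : ℚ)/36) * E12 + ((-47 : ℚ)/36) * E14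
  have X12 : x ⟨12, by omega⟩ = 0 := by linear_combination ((85 : ℚ)/9) * E2 + ((181 : ℚ)/4) * E3 + ((19 : ℚ)/12) * E4 + ((149 : ℚ)/6) * E5 + ((-5 : ℚ)/12) * E6 + ((469 : ℚ)/36) * E7 + ((-19 : ℚ)/9) * E8 + ((245 : ℚ)/36) * E9 + ((-53 : ℚ)/36) * E10 + ((-91 : ℚ)/9) * E11 + ((-19 : ℚ)/36) * E12 + (1 : ℚ) * E13 + ((-91 : ℚ)/36) * E14
  have X13 : x ⟨13, by omega⟩ = 0 := by linear_combination ((-5 : ℚ)/99) * E2 + ((3 : ℚ)/44) * E3 + ((1 : ℚ)/132) * E4 + ((-1 : ℚ)/66) * E5 + ((1 : ℚ)/132) * E6 + ((-17 : ℚ)/396) * E7 + ((-1 : ℚ)/99) * E8 + ((1 : ℚ)/36) * E9 + ((1 : ℚ)/396) * E10 + ((-1 : ℚ)/99) * E11 + ((-1 : ℚ)/396) * E12 + ((-1 : ℚ)/396) * E14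
  have E15 := hx 15
  simp only [sum15] at E15
  simp only [X0, X1, X2, X3, X4, X5, X6, X7, X8, X9, X10, X11, X12, X13,
    zero_mul, zero_add, v14_15, mul_one] at E15
  have X14 : x ⟨14, by omega⟩ = 0 := E15
  intro i
  fin_cases i
  exacts [X0, X1, X2, X3, X4, X5, X6, X7, X8, X9, X10, X11, X12, X13, X14]
end
end
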